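/- arXiv:2402.05514 — 5 statements merged into one kernel-verified Lean document; each statement's English description precedes it below -/
import Mathlib

section
/- Let μ be a finite nonnegative Borel measure on (0,1), let R > 0, and suppose s ↦ c_{N,s} is a bounded positive measurable function on (0,1). Then lim_{r → +∞} ( ∫_{(0,1)} c_{N,s}/(r+R)^{N+2s} dμ(s) ) / ( ∫_{(0,1)} c_{N,s}/(r−R)^{N+2s} dμ(s) ) = 1. -/
open MeasureTheory Set Filter Topology

noncomputable section

/-- Asymptotic ratio lemma: for a finite nontrivial measure `μ` on `(0,1)`, `R > 0`
and `c` bounded, positive and measurable on `(0,1)`,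
`(∫ c_s/(r+R)^{N+2s} dμ)/(∫ c_s/(r-R)^{N+2s} dμ) → 1` as `r → ∞`. -/
theorem statement7 (N : ℕ) (μ : Measure ℝ) [IsFiniteMeasure μ]
    (hμ : μ (Set.Ioo (0 : ℝ) 1) ≠ 0)
    (R : ℝ) (hR : 0 < R)
    (c : ℝ → ℝ) (hcm : Measurable c)
    (hcpos : ∀ s ∈ Set.Ioo (0 : ℝ) 1, 0 < c s)
    (M : ℝ) (hM : ∀ s ∈ Set.Ioo (0 : ℝ) 1, c s ≤ M) :
    Filter.Tendsto (fun r : ℝ =>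
        (∫ s in Set.Ioo (0 : ℝ) 1, c s / (r + R) ^ ((N : ℝ) + 2 * s) ∂μ) /
        (∫ s in Set.Ioo (0 : ℝ) 1, c s / (r - R) ^ ((N : ℝ) + 2 * s) ∂μ))
      Filter.atTop (nhds 1) := by
  -- integrability helper
  have hint : ∀ a : ℝ, 1 ≤ a →
      IntegrableOn (fun s => c s / a ^ ((N : ℝ) + 2 * s)) (Set.Ioo (0 : ℝ) 1) μ := by
    intro a ha
    refine Integrable.mono' (integrable_const (max M 0)) ?_ ?_
    · have ha0 : (0:ℝ) < a := lt_of_lt_of_le one_pos ha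
      have hcont : Continuous fun s : ℝ => a ^ ((N : ℝ) + 2 * s) := by
        simp only [Real.rpow_def_of_pos ha0]
        continuity
      exact (hcm.div hcont.measurable).aestronglyMeasurable
    · filter_upwards [ae_restrict_mem measurableSet_Ioo] with s hs
      have hc := hcpos s hs
      have he : (0:ℝ) ≤ (N : ℝ) + 2 * s := by
        have := hs.1; positivity
      have h1 : (1:ℝ) ≤ a ^ ((N : ℝ) + 2 * s) := Real.one_le_rpow ha he
      rw [Real.norm_eq_abs, abs_of_nonneg (by positivity)]
      calc c s / a ^ ((N : ℝ) + 2 * s) ≤ c s := div_le_self hc.le h1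
        _ ≤ M := hM s hs
        _ ≤ max M 0 := le_max_left _ _
  have key : ∀ᶠ r : ℝ in atTop,
      ((r - R) / (r + R)) ^ ((N : ℝ) + 2) ≤
        (∫ s in Set.Ioo (0 : ℝ) 1, c s / (r + R) ^ ((N : ℝ) + 2 * s) ∂μ) /
        (∫ s in Set.Ioo (0 : ℝ) 1, c s / (r - R) ^ ((N : ℝ) + 2 * s) ∂μ) ∧
      (∫ s in Set.Ioo (0 : ℝ) 1, c s / (r + R) ^ ((N : ℝ) + 2 * s) ∂μ) /
        (∫ s in Set.Ioo (0 : ℝ) 1, c s / (r - R) ^ ((N : ℝ) + 2 * s) ∂μ) ≤ 1 := by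
    filter_upwards [eventually_ge_atTop (R + 1)] with r hr
    have h1 : (0:ℝ) < r - R := by linarith
    have h1' : (1:ℝ) ≤ r - R := by linarith
    have h2 : (0:ℝ) < r + R := by linarith
    have h2' : (1:ℝ) ≤ r + R := by linarith
    have hle : r - R ≤ r + R := by linarith
    have hFint := hint (r + R) h2'
    have hGint := hint (r - R) h1'
    -- positivity of the denominator integral
    have hGpos : 0 < ∫ s in Set.Ioo (0 : ℝ) 1, c s / (r - R) ^ ((N : ℝ) + 2 * s) ∂μ := by
      rw [setIntegral_pos_iff_support_of_nonneg_ae ?_ hGint]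
      · have hsub : Set.Ioo (0:ℝ) 1 ⊆
            Function.support (fun s => c s / (r - R) ^ ((N : ℝ) + 2 * s)) := by
          intro s hs
          have hc := hcpos s hs
          have hd : (0:ℝ) < (r - R) ^ ((N : ℝ) + 2 * s) := Real.rpow_pos_of_pos h1 _
          exact ne_of_gt (by positivity)
        rw [Set.inter_eq_right.mpr hsub]
        exact hμ.bot_lt
      · filter_upwards [ae_restrict_mem measurableSet_Ioo] with s hs
        have hc := hcpos s hs
        have hd : (0:ℝ) < (r - R) ^ ((N : ℝ) + 2 * s) := Real.rpow_pos_of_pos h1 _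
        positivity
    -- pointwise upper bound
    have hFG : ∫ s in Set.Ioo (0 : ℝ) 1, c s / (r + R) ^ ((N : ℝ) + 2 * s) ∂μ ≤
        ∫ s in Set.Ioo (0 : ℝ) 1, c s / (r - R) ^ ((N : ℝ) + 2 * s) ∂μ := by
      refine setIntegral_mono_on hFint hGint measurableSet_Ioo ?_
      intro s hs
      have he : (0:ℝ) ≤ (N : ℝ) + 2 * s := by have := hs.1; positivity
      have hd : (0:ℝ) < (r - R) ^ ((N : ℝ) + 2 * s) := Real.rpow_pos_of_pos h1 _
      have hdd : (r - R) ^ ((N : ℝ) + 2 * s) ≤ (r + R) ^ ((N : ℝ) + 2 * s) :=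
        Real.rpow_le_rpow h1.le hle he
      exact div_le_div_of_nonneg_left (hcpos s hs).le hd hdd
    -- pointwise lower bound
    have hLG : ((r - R) / (r + R)) ^ ((N : ℝ) + 2) *
        (∫ s in Set.Ioo (0 : ℝ) 1, c s / (r - R) ^ ((N : ℝ) + 2 * s) ∂μ) ≤
        ∫ s in Set.Ioo (0 : ℝ) 1, c s / (r + R) ^ ((N : ℝ) + 2 * s) ∂μ := by
      rw [← integral_const_mul]
      refine setIntegral_mono_on (hGint.const_mul _) hFint measurableSet_Ioo ?_
      intro s hs
      have hs0 := hs.1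
      have hs1 := hs.2
      have hc := hcpos s hs
      have he : (0:ℝ) ≤ (N : ℝ) + 2 * s := by positivity
      have hq0 : (0:ℝ) < (r - R) / (r + R) := div_pos h1 h2
      have hq1 : (r - R) / (r + R) ≤ 1 := (div_le_one h2).mpr hle
      have hmono : ((r - R) / (r + R)) ^ ((N : ℝ) + 2) ≤
          ((r - R) / (r + R)) ^ ((N : ℝ) + 2 * s) :=
        Real.rpow_le_rpow_of_exponent_ge hq0 hq1 (by linarith)
      have hGs : (0:ℝ) ≤ c s / (r - R) ^ ((N : ℝ) + 2 * s) := by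
        have hd : (0:ℝ) < (r - R) ^ ((N : ℝ) + 2 * s) := Real.rpow_pos_of_pos h1 _
        positivity
      calc ((r - R) / (r + R)) ^ ((N : ℝ) + 2) * (c s / (r - R) ^ ((N : ℝ) + 2 * s))
          ≤ ((r - R) / (r + R)) ^ ((N : ℝ) + 2 * s) * (c s / (r - R) ^ ((N : ℝ) + 2 * s)) :=
            mul_le_mul_of_nonneg_right hmono hGs
        _ = c s / (r + R) ^ ((N : ℝ) + 2 * s) := by
            rw [Real.div_rpow h1.le h2.le]
            have hd1 : (r - R) ^ ((N : ℝ) + 2 * s) ≠ 0 :=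
              (Real.rpow_pos_of_pos h1 _).ne'
            have hd2 : (r + R) ^ ((N : ℝ) + 2 * s) ≠ 0 :=
              (Real.rpow_pos_of_pos h2 _).ne'
            field_simp
    constructor
    · rw [le_div_iff₀ hGpos]
      exact hLG
    · rw [div_le_one hGpos]
      exact hFG
  have hfrac : Tendsto (fun r : ℝ => (r - R) / (r + R)) atTop (𝓝 1) := by
    have h0 : Tendsto (fun r : ℝ => 1 - 2 * R / (r + R)) atTop (𝓝 (1 - 0)) :=
      tendsto_const_nhds.sub
        (Tendsto.div_atTop tendsto_const_nhds (tendsto_atTop_add_const_right _ R tendsto_id))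
    rw [sub_zero] at h0
    refine h0.congr' ?_
    filter_upwards [eventually_gt_atTop (-R)] with r hr
    have hne : r + R ≠ 0 := ne_of_gt (by linarith : (0:ℝ) < r + R)
    field_simp
    ring
  have hL : Tendsto (fun r : ℝ => ((r - R) / (r + R)) ^ ((N : ℝ) + 2)) atTop (𝓝 1) := by
    have := hfrac.rpow_const (p := (N : ℝ) + 2) (Or.inl one_ne_zero)
    simpa using this
  exact tendsto_of_tendsto_of_tendsto_of_le_of_le' hL tendsto_const_nhds
    (key.mono fun r h => h.1) (key.mono fun r h => h.2)
end
end

section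
/- (Asymptotics at infinity of bounded Neumann-harmonic functions.) Let Ω ⊆ ℝᴺ be a bounded open set with |Ω| > 0, μ a finite nonnegative nontrivial Borel measure on (0,1), and u : ℝᴺ → ℝ bounded and measurable with u ∈ L¹(Ω) satisfying ∫_{(0,1)} 𝒩ₛu(x) dμ(s) = 0 for all x ∈ ℝᴺ∖Ω̄. Then lim_{|x|→+∞} u(x) = (1/|Ω|) ∫_Ω u(y) dy. -/
open MeasureTheory Set Filter

noncomputable section

lemma aux_measurable_rpow : Measurable fun p : ℝ × ℝ => p.1 ^ p.2 := by
  have heq : (fun p : ℝ × ℝ => p.1 ^ p.2) = fun p : ℝ × ℝ =>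
      if p.1 = 0 then (if p.2 = 0 then (1:ℝ) else 0)
      else if p.1 < 0 then Real.exp (Real.log p.1 * p.2) * Real.cos (p.2 * Real.pi)
      else Real.exp (Real.log p.1 * p.2) := by
    ext p
    split_ifs with h1 h2 h3
    · rw [h1, h2, Real.rpow_zero]
    · rw [h1, Real.zero_rpow h2]
    · rw [Real.rpow_def_of_neg h3]
    · rw [Real.rpow_def_of_pos (lt_of_le_of_ne (not_lt.1 h3) (Ne.symm h1))]
  rw [heq]
  apply Measurable.ite (measurableSet_eq_fun measurable_fst measurable_const)
  · exact Measurable.ite (measurableSet_eq_fun measurable_snd measurable_const)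
      measurable_const measurable_const
  · apply Measurable.ite (measurableSet_lt measurable_fst measurable_const)
    · exact (((Real.measurable_log.comp measurable_fst).mul measurable_snd).exp).mul
        ((measurable_snd.mul measurable_const).cos)
    · exact ((Real.measurable_log.comp measurable_fst).mul measurable_snd).exp

lemma measurable_rpow_aux2 {α : Type*} [MeasurableSpace α] {f g : α → ℝ}
    (hf : Measurable f) (hg : Measurable g) : Measurable fun a => f a ^ g a :=
  aux_measurable_rpow.comp (hf.prodMk hg)


set_option maxHeartbeats 1000000 in
/-- A bounded function satisfying the superposed homogeneous Neumann condition outside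
`Ω̄` tends to the average of `u` over `Ω` as `|x| → ∞`. -/
theorem statement8 (N : ℕ) (Ω : Set (EuclideanSpace ℝ (Fin N)))
    (hΩo : IsOpen Ω) (hΩb : Bornology.IsBounded Ω) (hΩpos : volume Ω ≠ 0)
    (μ : Measure ℝ) [IsFiniteMeasure μ] (hμ : μ (Set.Ioo (0 : ℝ) 1) ≠ 0)
    (c : ℝ → ℝ) (hcm : Measurable c) (hcpos : ∀ s ∈ Set.Ioo (0 : ℝ) 1, 0 < c s)
    (M : ℝ) (hM : ∀ s ∈ Set.Ioo (0 : ℝ) 1, c s ≤ M)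
    (u : EuclideanSpace ℝ (Fin N) → ℝ) (hum : Measurable u)
    (hub : ∃ K, ∀ x, |u x| ≤ K) (huL1 : IntegrableOn u Ω)
    (hNeu : ∀ x ∉ closure Ω,
      (∫ s in Set.Ioo (0 : ℝ) 1,
        (c s * ∫ y in Ω, (u x - u y) / ‖x - y‖ ^ ((N : ℝ) + 2 * s)) ∂μ) = 0) :
    Filter.Tendsto u (Filter.comap (fun x => ‖x‖) Filter.atTop)
      (nhds ((∫ y in Ω, u y) / (volume Ω).toReal)) := by
  obtain ⟨K, hK⟩ := hub
  have hK0 : 0 ≤ K := (abs_nonneg _).trans (hK 0)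
  have hΩm : MeasurableSet Ω := hΩo.measurableSet
  have hVfin : volume Ω ≠ ⊤ := hΩb.measure_lt_top.ne
  set V : ℝ := (volume Ω).toReal with hVdef
  have hV : 0 < V := ENNReal.toReal_pos hΩpos hVfin
  set avg : ℝ := (∫ y in Ω, u y) / V with havgdef
  set K' : ℝ := K + |avg| with hK'def
  have hK'0 : 0 ≤ K' := by positivity
  have huavg : ∀ y, |u y - avg| ≤ K' := by
    intro y
    rw [hK'def, sub_eq_add_neg]
    exact (abs_add_le _ _).trans (by simp [hK y])
  have hM0 : 0 ≤ M :=
    le_trans (hcpos (1/2) (by norm_num)).le (hM (1/2) (by norm_num))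
  obtain ⟨R₀, hR₀⟩ := hΩb.subset_closedBall (0 : EuclideanSpace ℝ (Fin N))
  set R : ℝ := max R₀ 0 with hRdef
  have hR0 : 0 ≤ R := le_max_right _ _
  have hRc : closure Ω ⊆ Metric.closedBall 0 R := by
    apply closure_minimal _ Metric.isClosed_closedBall
    exact hR₀.trans (Metric.closedBall_subset_closedBall (le_max_left _ _))
  -- the core uniform estimate
  have core : ∀ x : EuclideanSpace ℝ (Fin N), R + 1 ≤ ‖x‖ →
      |u x - avg| ≤ K' * (((‖x‖ + R) / (‖x‖ - R)) ^ ((N : ℝ) + 2) - 1) := by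
    intro x hx
    set a : ℝ := ‖x‖ - R with hadef
    set b : ℝ := ‖x‖ + R with hbdef
    have ha1 : 1 ≤ a := by rw [hadef]; linarith
    have ha0 : 0 < a := one_pos.trans_le ha1
    have hab : a ≤ b := by rw [hadef, hbdef]; linarith
    have hb1 : 1 ≤ b := ha1.trans hab
    have hb0 : 0 < b := one_pos.trans_le hb1
    set δ : ℝ := (b / a) ^ ((N : ℝ) + 2) - 1 with hδdef
    have hba1 : 1 ≤ b / a := (one_le_div ha0).2 hab
    have hδ0 : 0 ≤ δ := by
      have := Real.one_le_rpow hba1 (by positivity : (0:ℝ) ≤ (N : ℝ) + 2)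
      rw [hδdef]; linarith
    have hxo : x ∉ closure Ω := by
      intro h
      have := hRc h
      rw [Metric.mem_closedBall, dist_zero_right] at this
      linarith
    have hyR : ∀ y ∈ Ω, ‖y‖ ≤ R := by
      intro y hy
      have := hRc (subset_closure hy)
      rwa [Metric.mem_closedBall, dist_zero_right] at this
    have hdl : ∀ y ∈ Ω, a ≤ ‖x - y‖ := by
      intro y hy
      have h1 := norm_sub_norm_le x y
      have h2 := hyR y hy
      rw [hadef]; linarith
    have hdu : ∀ y ∈ Ω, ‖x - y‖ ≤ b := by
      intro y hy
      have h1 := norm_sub_le x y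
      have h2 := hyR y hy
      rw [hbdef]; linarith
    have he0 : ∀ s ∈ Ioo (0:ℝ) 1, (0:ℝ) ≤ (N : ℝ) + 2 * s := by
      intro s hs
      have : (0:ℝ) ≤ (N:ℝ) := Nat.cast_nonneg N
      nlinarith [hs.1]
    have heN : ∀ s ∈ Ioo (0:ℝ) 1, (N : ℝ) + 2 * s ≤ (N : ℝ) + 2 := by
      intro s hs; nlinarith [hs.2]
    -- kernel bounds
    have hk_pos : ∀ s ∈ Ioo (0:ℝ) 1, ∀ y ∈ Ω,
        (0:ℝ) < (‖x - y‖ ^ ((N : ℝ) + 2 * s))⁻¹ := by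
      intro s hs y hy
      exact inv_pos.2 (Real.rpow_pos_of_pos (ha0.trans_le (hdl y hy)) _)
    have hk_le : ∀ s ∈ Ioo (0:ℝ) 1, ∀ y ∈ Ω,
        (‖x - y‖ ^ ((N : ℝ) + 2 * s))⁻¹ ≤ (a ^ ((N : ℝ) + 2 * s))⁻¹ := by
      intro s hs y hy
      exact inv_anti₀ (Real.rpow_pos_of_pos ha0 _)
        (Real.rpow_le_rpow ha0.le (hdl y hy) (he0 s hs))
    have hk_ge : ∀ s ∈ Ioo (0:ℝ) 1, ∀ y ∈ Ω,
        (b ^ ((N : ℝ) + 2 * s))⁻¹ ≤ (‖x - y‖ ^ ((N : ℝ) + 2 * s))⁻¹ := by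
      intro s hs y hy
      exact inv_anti₀ (Real.rpow_pos_of_pos (ha0.trans_le (hdl y hy)) _)
        (Real.rpow_le_rpow (ha0.le.trans (hdl y hy)) (hdu y hy) (he0 s hs))
    have hMle1 : ∀ s ∈ Ioo (0:ℝ) 1, (a ^ ((N : ℝ) + 2 * s))⁻¹ ≤ 1 := by
      intro s hs
      exact inv_le_one_of_one_le₀ (Real.one_le_rpow ha1 (he0 s hs))
    have hk_le1 : ∀ s ∈ Ioo (0:ℝ) 1, ∀ y ∈ Ω,
        (‖x - y‖ ^ ((N : ℝ) + 2 * s))⁻¹ ≤ 1 := fun s hs y hy =>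
      (hk_le s hs y hy).trans (hMle1 s hs)
    have hm_pos : ∀ s : ℝ, (0:ℝ) < (b ^ ((N : ℝ) + 2 * s))⁻¹ := fun s =>
      inv_pos.2 (Real.rpow_pos_of_pos hb0 _)
    have hm_le1 : ∀ s ∈ Ioo (0:ℝ) 1, (b ^ ((N : ℝ) + 2 * s))⁻¹ ≤ 1 := by
      intro s hs
      exact inv_le_one_of_one_le₀ (Real.one_le_rpow hb1 (he0 s hs))
    have hMδ : ∀ s ∈ Ioo (0:ℝ) 1,
        (a ^ ((N : ℝ) + 2 * s))⁻¹ - (b ^ ((N : ℝ) + 2 * s))⁻¹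
          ≤ δ * (b ^ ((N : ℝ) + 2 * s))⁻¹ := by
      intro s hs
      have hane : a ^ ((N : ℝ) + 2 * s) ≠ 0 := (Real.rpow_pos_of_pos ha0 _).ne'
      have hbne : b ^ ((N : ℝ) + 2 * s) ≠ 0 := (Real.rpow_pos_of_pos hb0 _).ne'
      have h1 : (a ^ ((N : ℝ) + 2 * s))⁻¹
          = (b / a) ^ ((N : ℝ) + 2 * s) * (b ^ ((N : ℝ) + 2 * s))⁻¹ := by
        rw [Real.div_rpow hb0.le ha0.le]
        field_simp
      have h2 : (b / a) ^ ((N : ℝ) + 2 * s) ≤ (b / a) ^ ((N : ℝ) + 2) :=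
        Real.rpow_le_rpow_of_exponent_le hba1 (heN s hs)
      calc (a ^ ((N : ℝ) + 2 * s))⁻¹ - (b ^ ((N : ℝ) + 2 * s))⁻¹
          = ((b / a) ^ ((N : ℝ) + 2 * s) - 1) * (b ^ ((N : ℝ) + 2 * s))⁻¹ := by
            rw [h1]; ring
        _ ≤ ((b / a) ^ ((N : ℝ) + 2) - 1) * (b ^ ((N : ℝ) + 2 * s))⁻¹ := by
            apply mul_le_mul_of_nonneg_right _ (hm_pos s).le
            linarith
        _ = δ * (b ^ ((N : ℝ) + 2 * s))⁻¹ := by rw [hδdef]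
    -- measurability of the kernel
    have hkm : ∀ s : ℝ,
        Measurable (fun y : EuclideanSpace ℝ (Fin N) =>
          (‖x - y‖ ^ ((N : ℝ) + 2 * s))⁻¹) := by
      intro s
      refine Measurable.inv ?_
      exact measurable_rpow_aux2
        ((continuous_const.sub continuous_id).norm.measurable) measurable_const
    -- integrability over Ω of bounded measurable functions
    have intΩ : ∀ (f : EuclideanSpace ℝ (Fin N) → ℝ) (C : ℝ), Measurable f →
        (∀ y ∈ Ω, |f y| ≤ C) → IntegrableOn f Ω := by
      intro f C hf hC
      refine Measure.integrableOn_of_bounded (M := C) hVfin hf.aestronglyMeasurable ?_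
      rw [ae_restrict_iff' hΩm]
      exact ae_of_all _ (fun y hy => by simpa using hC y hy)
    have ik : ∀ s ∈ Ioo (0:ℝ) 1,
        IntegrableOn (fun y => (‖x - y‖ ^ ((N : ℝ) + 2 * s))⁻¹) Ω := by
      intro s hs
      refine intΩ _ 1 (hkm s) (fun y hy => ?_)
      rw [abs_of_pos (hk_pos s hs y hy)]
      exact hk_le1 s hs y hy
    have iuk : ∀ s ∈ Ioo (0:ℝ) 1,
        IntegrableOn (fun y => u y * (‖x - y‖ ^ ((N : ℝ) + 2 * s))⁻¹) Ω := by
      intro s hs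
      refine intΩ _ K (hum.mul (hkm s)) (fun y hy => ?_)
      rw [abs_mul]
      calc |u y| * |(‖x - y‖ ^ ((N : ℝ) + 2 * s))⁻¹| ≤ K * 1 := by
            apply mul_le_mul (hK y) _ (abs_nonneg _) hK0
            rw [abs_of_pos (hk_pos s hs y hy)]
            exact hk_le1 s hs y hy
        _ = K := mul_one K
    have iG : ∀ s ∈ Ioo (0:ℝ) 1,
        IntegrableOn (fun y => (u y - avg) * (‖x - y‖ ^ ((N : ℝ) + 2 * s))⁻¹) Ω := by
      intro s hs
      refine intΩ _ K' ((hum.sub measurable_const).mul (hkm s)) (fun y hy => ?_)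
      rw [abs_mul]
      calc |u y - avg| * |(‖x - y‖ ^ ((N : ℝ) + 2 * s))⁻¹| ≤ K' * 1 := by
            apply mul_le_mul (huavg y) _ (abs_nonneg _) hK'0
            rw [abs_of_pos (hk_pos s hs y hy)]
            exact hk_le1 s hs y hy
        _ = K' := mul_one K'
    -- the three parametric integrals
    set P : ℝ → ℝ := fun s => ∫ y in Ω, (‖x - y‖ ^ ((N : ℝ) + 2 * s))⁻¹ with hPdef
    set Q : ℝ → ℝ := fun s => ∫ y in Ω, u y * (‖x - y‖ ^ ((N : ℝ) + 2 * s))⁻¹ with hQdef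
    set G : ℝ → ℝ := fun s =>
      ∫ y in Ω, (u y - avg) * (‖x - y‖ ^ ((N : ℝ) + 2 * s))⁻¹ with hGdef
    have hker2 : Measurable (fun p : ℝ × EuclideanSpace ℝ (Fin N) =>
        (‖x - p.2‖ ^ ((N : ℝ) + 2 * p.1))⁻¹) := by
      refine Measurable.inv ?_
      exact measurable_rpow_aux2
        ((continuous_const.sub continuous_snd).norm.measurable)
        (measurable_const.add (measurable_const.mul measurable_fst))
    have hPm : Measurable P := by
      rw [hPdef]
      exact (hker2.stronglyMeasurable.integral_prod_right').measurable
    have hQm : Measurable Q := by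
      rw [hQdef]
      exact (((hum.comp measurable_snd).mul hker2).stronglyMeasurable.integral_prod_right').measurable
    have hGm : Measurable G := by
      rw [hGdef]
      exact ((((hum.comp measurable_snd).sub measurable_const).mul
        hker2).stronglyMeasurable.integral_prod_right').measurable
    -- bounds on P, Q, G
    have hPb : ∀ s ∈ Ioo (0:ℝ) 1, |P s| ≤ V := by
      intro s hs
      have := norm_setIntegral_le_of_norm_le_const (μ := volume) (f := fun y =>
          (‖x - y‖ ^ ((N : ℝ) + 2 * s))⁻¹) (C := 1) hΩb.measure_lt_top
        (fun y hy => by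
          rw [Real.norm_eq_abs, abs_of_pos (hk_pos s hs y hy)]
          exact hk_le1 s hs y hy)
      rw [Real.norm_eq_abs] at this
      simp only [one_mul] at this
      exact this
    have hQb : ∀ s ∈ Ioo (0:ℝ) 1, |Q s| ≤ K * V := by
      intro s hs
      have := norm_setIntegral_le_of_norm_le_const (μ := volume) (f := fun y =>
          u y * (‖x - y‖ ^ ((N : ℝ) + 2 * s))⁻¹) (C := K) hΩb.measure_lt_top
        (fun y hy => by
          rw [Real.norm_eq_abs, abs_mul]
          calc |u y| * |(‖x - y‖ ^ ((N : ℝ) + 2 * s))⁻¹| ≤ K * 1 := by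
                apply mul_le_mul (hK y) _ (abs_nonneg _) hK0
                rw [abs_of_pos (hk_pos s hs y hy)]
                exact hk_le1 s hs y hy
            _ = K := mul_one K)
      rw [Real.norm_eq_abs] at this
      exact this
    -- lower bound for P
    have hPlow : ∀ s ∈ Ioo (0:ℝ) 1, V * (b ^ ((N : ℝ) + 2 * s))⁻¹ ≤ P s := by
      intro s hs
      have h := setIntegral_mono_on (μ := volume)
        (f := fun _ => (b ^ ((N : ℝ) + 2 * s))⁻¹)
        (g := fun y => (‖x - y‖ ^ ((N : ℝ) + 2 * s))⁻¹)
        (integrableOn_const hΩb.measure_lt_top.ne) (ik s hs) hΩm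
        (fun y hy => hk_ge s hs y hy)
      rw [setIntegral_const, smul_eq_mul] at h
      exact h
    -- bound for G using the zero-average trick
    have hsum0 : (∫ y in Ω, (u y - avg)) = 0 := by
      rw [integral_sub huL1 (integrableOn_const hΩb.measure_lt_top.ne),
        setIntegral_const, smul_eq_mul]
      rw [show volume.real Ω = V from rfl]
      rw [havgdef]
      field_simp
      ring
    have hGalt : ∀ s ∈ Ioo (0:ℝ) 1, G s =
        ∫ y in Ω, (u y - avg) *
          ((‖x - y‖ ^ ((N : ℝ) + 2 * s))⁻¹ - (b ^ ((N : ℝ) + 2 * s))⁻¹) := by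
      intro s hs
      have hconst : IntegrableOn (fun y : EuclideanSpace ℝ (Fin N) =>
          (u y - avg) * (b ^ ((N : ℝ) + 2 * s))⁻¹) Ω :=
        (huL1.sub (integrableOn_const hΩb.measure_lt_top.ne)).mul_const _
      have : (∫ y in Ω, (u y - avg) *
          ((‖x - y‖ ^ ((N : ℝ) + 2 * s))⁻¹ - (b ^ ((N : ℝ) + 2 * s))⁻¹))
          = G s - ∫ y in Ω, (u y - avg) * (b ^ ((N : ℝ) + 2 * s))⁻¹ := by
        rw [hGdef]
        rw [← integral_sub (iG s hs) hconst]
        congr 1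
        ext y
        ring
      rw [this, integral_mul_const, hsum0, zero_mul, sub_zero]
    have hGb : ∀ s ∈ Ioo (0:ℝ) 1, |G s| ≤ K' * δ * (V * (b ^ ((N : ℝ) + 2 * s))⁻¹) := by
      intro s hs
      rw [hGalt s hs]
      have hmeas : Measurable (fun y : EuclideanSpace ℝ (Fin N) =>
          (u y - avg) * ((‖x - y‖ ^ ((N : ℝ) + 2 * s))⁻¹ - (b ^ ((N : ℝ) + 2 * s))⁻¹)) :=
        (hum.sub measurable_const).mul ((hkm s).sub measurable_const)
      have h := norm_setIntegral_le_of_norm_le_const (μ := volume)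
        (f := fun y => (u y - avg) * ((‖x - y‖ ^ ((N : ℝ) + 2 * s))⁻¹ - (b ^ ((N : ℝ) + 2 * s))⁻¹))
        (C := K' * (δ * (b ^ ((N : ℝ) + 2 * s))⁻¹)) hΩb.measure_lt_top
        (fun y hy => by
          rw [Real.norm_eq_abs, abs_mul]
          apply mul_le_mul (huavg y) _ (abs_nonneg _) hK'0
          rw [abs_of_nonneg (sub_nonneg.2 (hk_ge s hs y hy))]
          calc (‖x - y‖ ^ ((N : ℝ) + 2 * s))⁻¹ - (b ^ ((N : ℝ) + 2 * s))⁻¹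
              ≤ (a ^ ((N : ℝ) + 2 * s))⁻¹ - (b ^ ((N : ℝ) + 2 * s))⁻¹ := by
                have := hk_le s hs y hy; linarith
            _ ≤ δ * (b ^ ((N : ℝ) + 2 * s))⁻¹ := hMδ s hs)
      rw [Real.norm_eq_abs] at h
      calc |∫ y in Ω, (u y - avg) *
            ((‖x - y‖ ^ ((N : ℝ) + 2 * s))⁻¹ - (b ^ ((N : ℝ) + 2 * s))⁻¹)|
          ≤ K' * (δ * (b ^ ((N : ℝ) + 2 * s))⁻¹) * V := h
        _ = K' * δ * (V * (b ^ ((N : ℝ) + 2 * s))⁻¹) := by ring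
    -- relation between Q, P, G
    have hGQ : ∀ s ∈ Ioo (0:ℝ) 1, Q s - avg * P s = G s := by
      intro s hs
      rw [hGdef, hQdef, hPdef]
      rw [← integral_const_mul, ← integral_sub (iuk s hs) ((ik s hs).const_mul avg)]
      congr 1
      ext y
      ring
    -- integrability over (0,1) of bounded measurable functions
    have intIoo : ∀ (f : ℝ → ℝ) (C : ℝ), Measurable f →
        (∀ s ∈ Ioo (0:ℝ) 1, |f s| ≤ C) → IntegrableOn f (Ioo 0 1) μ := by
      intro f C hf hC
      refine Measure.integrableOn_of_bounded (M := C) (measure_lt_top μ _).ne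
        hf.aestronglyMeasurable ?_
      refine (ae_restrict_iff' measurableSet_Ioo).2 ?_
      exact ae_of_all _ (fun s hs => by simpa using hC s hs)
    have hcb : ∀ s ∈ Ioo (0:ℝ) 1, |c s| ≤ M := by
      intro s hs
      rw [abs_of_pos (hcpos s hs)]
      exact hM s hs
    have icP : IntegrableOn (fun s => c s * P s) (Ioo 0 1) μ := by
      refine intIoo _ (M * V) (hcm.mul hPm) (fun s hs => ?_)
      rw [abs_mul]
      exact mul_le_mul (hcb s hs) (hPb s hs) (abs_nonneg _) hM0
    have icQ : IntegrableOn (fun s => c s * Q s) (Ioo 0 1) μ := by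
      refine intIoo _ (M * (K * V)) (hcm.mul hQm) (fun s hs => ?_)
      rw [abs_mul]
      exact mul_le_mul (hcb s hs) (hQb s hs) (abs_nonneg _) hM0
    have icG : IntegrableOn (fun s => c s * G s) (Ioo 0 1) μ := by
      refine intIoo _ (M * (K' * δ * V)) (hcm.mul hGm) (fun s hs => ?_)
      rw [abs_mul]
      apply mul_le_mul (hcb s hs) _ (abs_nonneg _) hM0
      calc |G s| ≤ K' * δ * (V * (b ^ ((N : ℝ) + 2 * s))⁻¹) := hGb s hs
        _ ≤ K' * δ * (V * 1) := by
            apply mul_le_mul_of_nonneg_left _ (by positivity)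
            exact mul_le_mul_of_nonneg_left (hm_le1 s hs) hV.le
        _ = K' * δ * V := by ring
    have hmm : Measurable (fun s : ℝ => (b ^ ((N : ℝ) + 2 * s))⁻¹) := by
      refine Measurable.inv ?_
      exact measurable_rpow_aux2 measurable_const
        (measurable_const.add (measurable_const.mul measurable_id))
    have icW : IntegrableOn (fun s => c s * (V * (b ^ ((N : ℝ) + 2 * s))⁻¹)) (Ioo 0 1) μ := by
      refine intIoo _ (M * V) (hcm.mul (measurable_const.mul hmm)) (fun s hs => ?_)
      rw [abs_mul]
      apply mul_le_mul (hcb s hs) _ (abs_nonneg _) hM0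
      rw [abs_of_pos (by positivity)]
      calc V * (b ^ ((N : ℝ) + 2 * s))⁻¹ ≤ V * 1 :=
            mul_le_mul_of_nonneg_left (hm_le1 s hs) hV.le
        _ = V := mul_one V
    -- main quantities
    set W : ℝ := ∫ s in Ioo (0:ℝ) 1, c s * P s ∂μ with hWdef
    set Z : ℝ := ∫ s in Ioo (0:ℝ) 1, c s * Q s ∂μ with hZdef
    set Wlow : ℝ := ∫ s in Ioo (0:ℝ) 1, c s * (V * (b ^ ((N : ℝ) + 2 * s))⁻¹) ∂μ with hWlowdef
    have hWlowpos : 0 < Wlow := by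
      rw [hWlowdef]
      rw [setIntegral_pos_iff_support_of_nonneg_ae _ icW]
      · apply lt_of_lt_of_le (hμ.bot_lt)
        apply measure_mono
        intro s hs
        refine ⟨ne_of_gt ?_, hs⟩
        exact mul_pos (hcpos s hs) (mul_pos hV (hm_pos s))
      · filter_upwards [ae_restrict_mem measurableSet_Ioo] with s hs
        exact (mul_pos (hcpos s hs) (mul_pos hV (hm_pos s))).le
    have hWlowW : Wlow ≤ W := by
      rw [hWlowdef, hWdef]
      apply setIntegral_mono_on icW icP measurableSet_Ioo
      intro s hs
      exact mul_le_mul_of_nonneg_left (hPlow s hs) (hcpos s hs).le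
    have hW : 0 < W := hWlowpos.trans_le hWlowW
    -- the Neumann identity
    have h0 := hNeu x hxo
    have hInner : ∀ s ∈ Ioo (0:ℝ) 1,
        c s * (∫ y in Ω, (u x - u y) / ‖x - y‖ ^ ((N : ℝ) + 2 * s))
          = u x * (c s * P s) - c s * Q s := by
      intro s hs
      have hpt : ∀ y : EuclideanSpace ℝ (Fin N),
          (u x - u y) / ‖x - y‖ ^ ((N : ℝ) + 2 * s)
            = u x * (‖x - y‖ ^ ((N : ℝ) + 2 * s))⁻¹
              - u y * (‖x - y‖ ^ ((N : ℝ) + 2 * s))⁻¹ := by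
        intro y
        rw [div_eq_mul_inv, sub_mul]
      rw [show (∫ y in Ω, (u x - u y) / ‖x - y‖ ^ ((N : ℝ) + 2 * s))
          = ∫ y in Ω, (u x * (‖x - y‖ ^ ((N : ℝ) + 2 * s))⁻¹
              - u y * (‖x - y‖ ^ ((N : ℝ) + 2 * s))⁻¹) from by
        apply integral_congr_ae
        exact ae_of_all _ hpt]
      rw [integral_sub ((ik s hs).const_mul (u x)) (iuk s hs), integral_const_mul]
      rw [hPdef, hQdef]
      ring
    have h1 : (∫ s in Ioo (0:ℝ) 1, (u x * (c s * P s) - c s * Q s) ∂μ) = 0 := by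
      refine Eq.trans ?_ h0
      exact setIntegral_congr_fun measurableSet_Ioo (fun s hs => (hInner s hs).symm)
    rw [integral_sub (icP.const_mul (u x)) icQ, integral_const_mul] at h1
    have hux : u x * W = Z := by
      have h2 : u x * W - Z = 0 := by rw [hWdef, hZdef]; exact h1
      linarith [h2]
    -- final estimate
    have h3 : Z - avg * W = ∫ s in Ioo (0:ℝ) 1, c s * G s ∂μ := by
      rw [hZdef, hWdef, ← integral_const_mul, ← integral_sub icQ (icP.const_mul avg)]
      apply setIntegral_congr_fun measurableSet_Ioo
      intro s hs
      show c s * Q s - avg * (c s * P s) = c s * G s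
      rw [← hGQ s hs]
      ring
    have hZWb : |Z - avg * W| ≤ K' * δ * W := by
      rw [h3]
      calc |∫ s in Ioo (0:ℝ) 1, c s * G s ∂μ|
          ≤ ∫ s in Ioo (0:ℝ) 1, |c s * G s| ∂μ := by
            have h := norm_integral_le_integral_norm (μ := μ.restrict (Ioo (0:ℝ) 1))
              (f := fun s => c s * G s)
            simp only [Real.norm_eq_abs] at h
            exact h
        _ ≤ ∫ s in Ioo (0:ℝ) 1, K' * δ * (c s * (V * (b ^ ((N : ℝ) + 2 * s))⁻¹)) ∂μ := by
            apply setIntegral_mono_on icG.abs ((icW.const_mul (K' * δ))) measurableSet_Ioo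
            intro s hs
            rw [abs_mul, abs_of_pos (hcpos s hs)]
            calc c s * |G s| ≤ c s * (K' * δ * (V * (b ^ ((N : ℝ) + 2 * s))⁻¹)) :=
                  mul_le_mul_of_nonneg_left (hGb s hs) (hcpos s hs).le
              _ = K' * δ * (c s * (V * (b ^ ((N : ℝ) + 2 * s))⁻¹)) := by ring
        _ = K' * δ * Wlow := by rw [integral_const_mul, hWlowdef]
        _ ≤ K' * δ * W := mul_le_mul_of_nonneg_left hWlowW (by positivity)
    have h4 : (u x - avg) * W = Z - avg * W := by rw [sub_mul, hux]
    have h5 : |u x - avg| * W = |Z - avg * W| := by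
      rw [← h4, abs_mul, abs_of_pos hW]
    have h6 : |u x - avg| * W ≤ (K' * δ) * W := by rw [h5]; exact hZWb
    have h7 : |u x - avg| ≤ K' * δ := le_of_mul_le_mul_right h6 hW
    exact h7
  -- conclusion via squeeze
  have hbound0 : Tendsto (fun t : ℝ => K' * (((t + R) / (t - R)) ^ ((N : ℝ) + 2) - 1))
      atTop (nhds 0) := by
    have h1 : Tendsto (fun t : ℝ => (t + R) / (t - R)) atTop (nhds 1) := by
      have h2 : Tendsto (fun t : ℝ => 1 + 2 * R / (t - R)) atTop (nhds (1 + 0)) := by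
        apply tendsto_const_nhds.add
        apply Tendsto.div_atTop tendsto_const_nhds
        exact tendsto_atTop_add_const_right atTop (-R) tendsto_id
      rw [add_zero] at h2
      apply h2.congr'
      filter_upwards [eventually_gt_atTop R] with t ht
      have : t - R ≠ 0 := sub_ne_zero.2 (ne_of_gt ht)
      field_simp
      ring
    have h4 : ContinuousAt (fun y : ℝ => y ^ ((N : ℝ) + 2)) 1 :=
      Real.continuousAt_rpow_const 1 _ (Or.inl one_ne_zero)
    have h5 := h4.tendsto.comp h1
    rw [Real.one_rpow] at h5
    have h6' : Tendsto (fun t : ℝ => ((t + R) / (t - R)) ^ ((N : ℝ) + 2) - 1)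
        atTop (nhds (1 - 1)) := h5.sub tendsto_const_nhds
    have h6 : Tendsto (fun t : ℝ => ((t + R) / (t - R)) ^ ((N : ℝ) + 2) - 1)
        atTop (nhds 0) := by simpa using h6'
    simpa using h6.const_mul K'
  have hcomp : Tendsto (fun x : EuclideanSpace ℝ (Fin N) =>
      K' * (((‖x‖ + R) / (‖x‖ - R)) ^ ((N : ℝ) + 2) - 1))
      (comap (fun x => ‖x‖) atTop) (nhds 0) :=
    hbound0.comp tendsto_comap
  rw [← tendsto_sub_nhds_zero_iff]
  apply squeeze_zero_norm' _ hcomp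
  have hev : ∀ᶠ x : EuclideanSpace ℝ (Fin N) in comap (fun x => ‖x‖) atTop,
      R + 1 ≤ ‖x‖ := by
    have h := preimage_mem_comap (m := fun x : EuclideanSpace ℝ (Fin N) => ‖x‖)
      (Ici_mem_atTop (R + 1))
    exact h
  filter_upwards [hev] with x hx
  rw [Real.norm_eq_abs]
  exact core x hx
end
end

section
/- (Poincaré inequality for superposed Gagliardo seminorms.) Let Ω ⊆ ℝᴺ be a bounded Lipschitz domain, and μ a finite nonnegative nontrivial Borel measure on (0,1). Then there exists c = c(Ω, μ) > 0 such that for every u with ∫_{(0,1)} c_{N,s} ∬_{Ω×Ω} |u(x)−u(y)|²/|x−y|^{N+2s} dx dy dμ(s) < ∞, one has ∫_Ω |u(x) − (1/|Ω|)∫_Ω u|² dx ≤ c ∫_{(0,1)} c_{N,s} ∬_{Ω×Ω} |u(x)−u(y)|²/|x−y|^{N+2s} dx dy dμ(s). -/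
open MeasureTheory Set Filter
open scoped ENNReal

noncomputable section

/-- Poincaré inequality for superposed Gagliardo seminorms: on a bounded (Lipschitz)
domain `Ω`, there is `C = C(Ω,μ) > 0` such that
`∫_Ω |u - avg_Ω u|² ≤ C ∫_{(0,1)} c_{N,s} ∬_{Ω×Ω} |u(x)-u(y)|²/|x-y|^{N+2s} dμ(s)`. -/
theorem statement9 (N : ℕ) (Ω : Set (EuclideanSpace ℝ (Fin N)))
    (hΩo : IsOpen Ω) (hΩb : Bornology.IsBounded Ω) (hΩpos : volume Ω ≠ 0)
    (μ : Measure ℝ) [IsFiniteMeasure μ] (hμ : μ (Set.Ioo (0 : ℝ) 1) ≠ 0)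
    (c : ℝ → ℝ) (hcm : Measurable c) (hcpos : ∀ s ∈ Set.Ioo (0 : ℝ) 1, 0 < c s)
    (hccont : ContinuousOn c (Set.Ioo (0 : ℝ) 1)) :
    ∃ C > (0 : ℝ), ∀ u : EuclideanSpace ℝ (Fin N) → ℝ, Measurable u →
      MemLp u 2 (volume.restrict Ω) →
      (∫⁻ s in Set.Ioo (0 : ℝ) 1,
          (ENNReal.ofReal (c s) * ∫⁻ x in Ω, ∫⁻ y in Ω,
            ENNReal.ofReal (|u x - u y| ^ 2 / ‖x - y‖ ^ ((N : ℝ) + 2 * s))) ∂μ) ≠ ⊤ →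
      (∫⁻ x in Ω,
          ENNReal.ofReal ((u x - (∫ y in Ω, u y) / (volume Ω).toReal) ^ 2))
        ≤ ENNReal.ofReal C *
          ∫⁻ s in Set.Ioo (0 : ℝ) 1,
            (ENNReal.ofReal (c s) * ∫⁻ x in Ω, ∫⁻ y in Ω,
              ENNReal.ofReal (|u x - u y| ^ 2 / ‖x - y‖ ^ ((N : ℝ) + 2 * s))) ∂μ := by
  -- Step 1: a compact subinterval `K = [a, 1-a] ⊆ (0,1)` with `μ K ≠ 0`.
  have hcover : Set.Ioo (0:ℝ) 1 ⊆ ⋃ n : ℕ, Set.Icc (1/((n:ℝ)+2)) (1 - 1/((n:ℝ)+2)) := by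
    intro t ht
    obtain ⟨n, hn⟩ := exists_nat_gt (max (1/t) (1/(1-t)))
    have h1t : (0:ℝ) < 1 - t := by linarith [ht.2]
    have h1 : 1/t < (n:ℝ) := lt_of_le_of_lt (le_max_left _ _) hn
    have h2 : 1/(1-t) < (n:ℝ) := lt_of_le_of_lt (le_max_right _ _) hn
    rw [div_lt_iff₀ ht.1] at h1
    rw [div_lt_iff₀ h1t] at h2
    refine Set.mem_iUnion.2 ⟨n, ?_, ?_⟩
    · rw [div_le_iff₀ (by positivity)]
      nlinarith [ht.1.le]
    · have : (1:ℝ)/((n:ℝ)+2) ≤ 1 - t := by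
        rw [div_le_iff₀ (by positivity)]
        nlinarith [h1t.le]
      linarith
  obtain ⟨n, hKpos⟩ : ∃ n : ℕ, μ (Set.Icc (1/((n:ℝ)+2)) (1 - 1/((n:ℝ)+2))) ≠ 0 := by
    by_contra h
    push_neg at h
    exact hμ (measure_mono_null hcover (measure_iUnion_null_iff.2 h))
  set a : ℝ := 1/((n:ℝ)+2) with ha_def
  set K : Set ℝ := Set.Icc a (1 - a) with hK_def
  have ha : 0 < a := by positivity
  have ha2 : a ≤ 1/2 := by
    rw [ha_def, div_le_div_iff₀ (by positivity) (by norm_num)]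
    have : (0:ℝ) ≤ (n:ℝ) := n.cast_nonneg
    linarith
  have hab : a ≤ 1 - a := by linarith
  have hKsub : K ⊆ Set.Ioo (0:ℝ) 1 := fun t htk =>
    ⟨lt_of_lt_of_le ha htk.1, lt_of_le_of_lt htk.2 (by linarith)⟩
  -- Step 2: minimum of `c` on `K`.
  obtain ⟨s₀, hs₀K, hs₀min⟩ :=
    isCompact_Icc.exists_isMinOn ⟨a, Set.left_mem_Icc.2 hab⟩ (hccont.mono hKsub)
  set ε : ℝ := c s₀ with hε_def
  have hε : 0 < ε := hcpos s₀ (hKsub hs₀K)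
  -- Step 3: a bound on the diameter of Ω.
  obtain ⟨D, hD⟩ := Metric.isBounded_iff.1 hΩb
  set M : ℝ := max D 1 with hM_def
  have hM1 : (1:ℝ) ≤ M := le_max_right _ _
  have hM0 : (0:ℝ) < M := lt_of_lt_of_le one_pos hM1
  set Mp : ℝ := M ^ ((N:ℝ) + 2) with hMp_def
  have hMp : 0 < Mp := Real.rpow_pos_of_pos hM0 _
  -- volume of Ω
  have hΩfin : volume Ω < ⊤ := hΩb.measure_lt_top
  set V : ℝ := (volume Ω).toReal with hV_def
  have hV : 0 < V := ENNReal.toReal_pos hΩpos hΩfin.ne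
  set m : ℝ := (μ K).toReal with hm_def
  have hm : 0 < m := ENNReal.toReal_pos hKpos (measure_ne_top μ K)
  refine ⟨Mp / (2 * V * ε * m), by positivity, ?_⟩
  intro u hum hu _hfin
  haveI : IsFiniteMeasure (volume.restrict Ω) :=
    ⟨by rwa [Measure.restrict_apply_univ]⟩
  -- Integrability facts
  have hQint : Integrable (fun x => u x ^ 2) (volume.restrict Ω) := hu.integrable_sq
  have hIint : Integrable u (volume.restrict Ω) := hu.integrable one_le_two
  set S : ℝ := ∫ y in Ω, u y with hS_def
  set Q : ℝ := ∫ y in Ω, u y ^ 2 with hQ_def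
  have hinner_int : ∀ x, Integrable (fun y => (u x - u y) ^ 2) (volume.restrict Ω) :=
    fun x => ((memLp_const (u x)).sub hu).integrable_sq
  have hinner : ∀ x, ∫ y in Ω, (u x - u y) ^ 2 = V * u x ^ 2 - 2 * u x * S + Q := by
    intro x
    have e : (fun y => (u x - u y) ^ 2)
        = fun y => (u x ^ 2 + (-(2 * u x)) * u y) + u y ^ 2 :=
      funext fun y => by ring
    have i1 : Integrable (fun y => (-(2 * u x)) * u y) (volume.restrict Ω) :=
      hIint.const_mul _
    have i2 : Integrable (fun y => u x ^ 2 + (-(2 * u x)) * u y) (volume.restrict Ω) :=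
      (integrable_const _).add i1
    rw [e, integral_add i2 hQint, integral_add (integrable_const _) i1,
      integral_const_mul, setIntegral_const, smul_eq_mul, measureReal_def]
    rw [hV_def, hS_def, hQ_def]; ring
  set J : ℝ := ∫ x in Ω, ∫ y in Ω, (u x - u y) ^ 2 with hJ_def
  have hgint : Integrable (fun x => (V * u x ^ 2 + (-(2 * S)) * u x) + Q)
      (volume.restrict Ω) :=
    ((hQint.const_mul V).add (hIint.const_mul _)).add (integrable_const _)
  have hJ : J = 2 * V * Q - 2 * S * S := by
    have h1 : J = ∫ x in Ω, ((V * u x ^ 2 + (-(2 * S)) * u x) + Q) := by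
      rw [hJ_def]
      refine integral_congr_ae (ae_of_all _ fun x => ?_)
      dsimp only
      rw [hinner x]; ring
    have i1 : Integrable (fun x => (-(2 * S)) * u x) (volume.restrict Ω) :=
      hIint.const_mul _
    have i2 : Integrable (fun x => V * u x ^ 2 + (-(2 * S)) * u x) (volume.restrict Ω) :=
      (hQint.const_mul V).add i1
    rw [h1, integral_add i2 (integrable_const _), integral_add (hQint.const_mul V) i1,
      integral_const_mul, integral_const_mul, setIntegral_const, smul_eq_mul, measureReal_def]
    rw [hV_def, hS_def, hQ_def]; ring
  have hPint : Integrable (fun x => (u x - S / V) ^ 2) (volume.restrict Ω) :=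
    (hu.sub (memLp_const _)).integrable_sq
  set P : ℝ := ∫ x in Ω, (u x - S / V) ^ 2 with hP_def
  have hP : P = Q - S * S / V := by
    have h1 : P = ∫ x in Ω, ((u x ^ 2 + (-(2 * (S / V))) * u x) + (S / V) ^ 2) := by
      rw [hP_def]
      refine integral_congr_ae (ae_of_all _ fun x => ?_); dsimp only; ring
    have i1 : Integrable (fun x => (-(2 * (S / V))) * u x) (volume.restrict Ω) :=
      hIint.const_mul _
    have i2 : Integrable (fun x => u x ^ 2 + (-(2 * (S / V))) * u x) (volume.restrict Ω) :=
      hQint.add i1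
    rw [h1, integral_add i2 (integrable_const _), integral_add hQint i1,
      integral_const_mul, setIntegral_const, smul_eq_mul, measureReal_def]
    rw [hQ_def, hS_def, hV_def]
    field_simp
    ring
  have hJP : J = 2 * V * P := by
    rw [hJ, hP]; field_simp
  have hPnn : 0 ≤ P := integral_nonneg fun x => sq_nonneg _
  -- lintegral ↔ integral conversions
  have hLHS : (∫⁻ x in Ω, ENNReal.ofReal ((u x - S / V) ^ 2)) = ENNReal.ofReal P :=
    (ofReal_integral_eq_lintegral_ofReal hPint (ae_of_all _ fun x => sq_nonneg _)).symm
  have hmeas_inner : ∀ x, Measurable fun y => ENNReal.ofReal ((u x - u y) ^ 2) :=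
    fun x => ((measurable_const.sub hum).pow_const 2).ennreal_ofReal
  have hL : (∫⁻ x in Ω, ∫⁻ y in Ω, ENNReal.ofReal ((u x - u y) ^ 2)) = ENNReal.ofReal J := by
    have h1 : ∀ x, (∫⁻ y in Ω, ENNReal.ofReal ((u x - u y) ^ 2))
        = ENNReal.ofReal (∫ y in Ω, (u x - u y) ^ 2) := fun x =>
      (ofReal_integral_eq_lintegral_ofReal (hinner_int x)
        (ae_of_all _ fun y => sq_nonneg _)).symm
    simp_rw [h1]
    refine (ofReal_integral_eq_lintegral_ofReal ?_
      (ae_of_all _ fun x => integral_nonneg fun y => sq_nonneg _)).symm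
    refine hgint.congr (ae_of_all _ fun x => ?_)
    dsimp only
    rw [hinner x]; ring
  -- pointwise lower bound on the Gagliardo integrand
  have key : ∀ s ∈ K, ∀ x ∈ Ω, ∀ y ∈ Ω,
      ENNReal.ofReal ((u x - u y) ^ 2) * ENNReal.ofReal Mp⁻¹
        ≤ ENNReal.ofReal (|u x - u y| ^ 2 / ‖x - y‖ ^ ((N : ℝ) + 2 * s)) := by
    intro s hs x hx y hy
    obtain ⟨hs0, hs1⟩ := hKsub hs
    rw [← ENNReal.ofReal_mul (sq_nonneg _)]
    refine ENNReal.ofReal_le_ofReal ?_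
    rcases eq_or_ne x y with rfl | hne
    · simp [div_nonneg (sq_nonneg _) (Real.rpow_nonneg (norm_nonneg _) _)]
    · have hxy : (0:ℝ) < ‖x - y‖ := by
        rw [norm_pos_iff]; exact sub_ne_zero.mpr hne
      have hle : ‖x - y‖ ^ ((N : ℝ) + 2 * s) ≤ Mp := by
        calc ‖x - y‖ ^ ((N : ℝ) + 2 * s) ≤ M ^ ((N : ℝ) + 2 * s) := by
              refine Real.rpow_le_rpow (norm_nonneg _) ?_ (by positivity)
              calc ‖x - y‖ = dist x y := (dist_eq_norm x y).symm
                _ ≤ D := hD hx hy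
                _ ≤ M := le_max_left _ _
          _ ≤ M ^ ((N : ℝ) + 2) := Real.rpow_le_rpow_of_exponent_le hM1 (by linarith)
      rw [sq_abs, mul_inv_le_iff₀ hMp, div_mul_eq_mul_div, le_div_iff₀
        (Real.rpow_pos_of_pos hxy _)]
      have := sq_nonneg (u x - u y)
      nlinarith [Real.rpow_pos_of_pos hxy ((N : ℝ) + 2 * s)]
  -- lower bound on the inner double integral, for s ∈ K
  have hG : ∀ s ∈ K, ENNReal.ofReal J * ENNReal.ofReal Mp⁻¹
      ≤ ∫⁻ x in Ω, ∫⁻ y in Ω,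
          ENNReal.ofReal (|u x - u y| ^ 2 / ‖x - y‖ ^ ((N : ℝ) + 2 * s)) := by
    intro s hs
    rw [← hL, ← lintegral_mul_const _
      (Measurable.lintegral_prod_right
        (f := fun x y => ENNReal.ofReal ((u x - u y) ^ 2))
        (((hum.comp measurable_fst).sub (hum.comp measurable_snd)).pow_const 2
          |>.ennreal_ofReal))]
    refine setLIntegral_mono' hΩo.measurableSet fun x hx => ?_
    rw [← lintegral_mul_const _ (hmeas_inner x)]
    exact setLIntegral_mono' hΩo.measurableSet fun y hy => key s hs x hx y hy
  -- main lower bound on the superposed seminorm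
  have hmain : ENNReal.ofReal (ε * (J * Mp⁻¹) * m)
      ≤ ∫⁻ s in Set.Ioo (0:ℝ) 1,
          (ENNReal.ofReal (c s) * ∫⁻ x in Ω, ∫⁻ y in Ω,
            ENNReal.ofReal (|u x - u y| ^ 2 / ‖x - y‖ ^ ((N : ℝ) + 2 * s))) ∂μ := by
    have hJnn : 0 ≤ J := by rw [hJP]; positivity
    have hμK : μ K = ENNReal.ofReal m := by
      rw [hm_def, ENNReal.ofReal_toReal (measure_ne_top μ K)]
    calc ENNReal.ofReal (ε * (J * Mp⁻¹) * m)
        = (ENNReal.ofReal ε * (ENNReal.ofReal J * ENNReal.ofReal Mp⁻¹)) * μ K := by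
          have h0 : 0 ≤ J * Mp⁻¹ := mul_nonneg hJnn (by positivity)
          rw [hμK, ENNReal.ofReal_mul (mul_nonneg hε.le h0), ENNReal.ofReal_mul hε.le,
            ENNReal.ofReal_mul hJnn]
      _ = ∫⁻ _ in K, ENNReal.ofReal ε * (ENNReal.ofReal J * ENNReal.ofReal Mp⁻¹) ∂μ :=
          (setLIntegral_const _ _).symm
      _ ≤ ∫⁻ s in K, (ENNReal.ofReal (c s) * ∫⁻ x in Ω, ∫⁻ y in Ω,
            ENNReal.ofReal (|u x - u y| ^ 2 / ‖x - y‖ ^ ((N : ℝ) + 2 * s))) ∂μ := by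
          refine setLIntegral_mono' measurableSet_Icc fun s hs => ?_
          exact mul_le_mul' (ENNReal.ofReal_le_ofReal (hs₀min hs)) (hG s hs)
      _ ≤ _ := lintegral_mono_set hKsub
  -- conclusion
  have hJnn : 0 ≤ J := by rw [hJP]; positivity
  calc (∫⁻ x in Ω, ENNReal.ofReal ((u x - S / V) ^ 2))
      = ENNReal.ofReal P := hLHS
    _ = ENNReal.ofReal (Mp / (2 * V * ε * m)) * ENNReal.ofReal (ε * (J * Mp⁻¹) * m) := by
        rw [← ENNReal.ofReal_mul (by positivity)]
        congr 1
        rw [hJP]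
        field_simp
    _ ≤ _ := mul_le_mul_right hmain _
end
end

section
/- (Continuous embedding into a fractional Sobolev space.) Let Ω ⊆ ℝᴺ be bounded, open, with Lipschitz boundary, μ a finite nonnegative nontrivial Borel measure on (0,1), and s♯ ∈ (0,1) with μ([s♯,1)) > 0. Define ‖u‖²_μ := ‖u‖²_{L²(Ω)} + (1/2)∫_{(0,1)} c_{N,s}[u]ₛ² dμ(s), with [u]ₛ² the Gagliardo seminorm over 𝒬 = ℝ²ᴺ∖(ℝᴺ∖Ω)². Then there is C > 0 such that ‖u‖_{H^{s♯}(Ω)} ≤ C‖u‖_μ for all u with ‖u‖_μ < ∞. -/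
open MeasureTheory Set Filter
open scoped ENNReal

noncomputable section

/-- Continuous embedding of `ℋ_μ(Ω)` into `H^{s♯}(Ω)`: for `s♯` with `μ([s♯,1)) > 0`,
the squared `H^{s♯}(Ω)` norm is bounded by `C` times the squared `‖·‖_μ` norm
(`L²(Ω)` part plus half the superposed Gagliardo energy over `𝒬 = ℝ²ᴺ∖(ℝᴺ∖Ω)²`). -/
theorem statement10 (N : ℕ) (Ω : Set (EuclideanSpace ℝ (Fin N)))
    (hΩo : IsOpen Ω) (hΩb : Bornology.IsBounded Ω)
    (μ : Measure ℝ) [IsFiniteMeasure μ] (hμ : μ (Set.Ioo (0 : ℝ) 1) ≠ 0)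
    (ssharp : ℝ) (hss : ssharp ∈ Set.Ioo (0 : ℝ) 1)
    (hssμ : μ (Set.Ico ssharp 1) ≠ 0)
    (c : ℝ → ℝ) (hcm : Measurable c) (hcpos : ∀ s ∈ Set.Ioo (0 : ℝ) 1, 0 < c s)
    (hccont : ContinuousOn c (Set.Ioo (0 : ℝ) 1)) :
    ∃ C > (0 : ℝ), ∀ u : EuclideanSpace ℝ (Fin N) → ℝ, Measurable u →
      (∫⁻ x in Ω, ENNReal.ofReal ((u x) ^ 2)) +
        (1 / 2) * (∫⁻ s in Set.Ioo (0 : ℝ) 1,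
          (ENNReal.ofReal (c s) *
            ∫⁻ p in ((Ωᶜ ×ˢ Ωᶜ)ᶜ : Set (EuclideanSpace ℝ (Fin N) × EuclideanSpace ℝ (Fin N))),
              ENNReal.ofReal (|u p.1 - u p.2| ^ 2 / ‖p.1 - p.2‖ ^ ((N : ℝ) + 2 * s))) ∂μ) ≠ ⊤ →
      (∫⁻ x in Ω, ENNReal.ofReal ((u x) ^ 2)) +
        (∫⁻ x in Ω, ∫⁻ y in Ω,
          ENNReal.ofReal (|u x - u y| ^ 2 / ‖x - y‖ ^ ((N : ℝ) + 2 * ssharp)))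
      ≤ ENNReal.ofReal C *
          ((∫⁻ x in Ω, ENNReal.ofReal ((u x) ^ 2)) +
            (1 / 2) * ∫⁻ s in Set.Ioo (0 : ℝ) 1,
              (ENNReal.ofReal (c s) *
                ∫⁻ p in ((Ωᶜ ×ˢ Ωᶜ)ᶜ : Set (EuclideanSpace ℝ (Fin N) × EuclideanSpace ℝ (Fin N))),
                  ENNReal.ofReal (|u p.1 - u p.2| ^ 2 / ‖p.1 - p.2‖ ^ ((N : ℝ) + 2 * s))) ∂μ) := by
  classical
  -- choose `t < 1` with `μ([s♯, t]) ≠ 0`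
  obtain ⟨t, ht1, hμK⟩ : ∃ t : ℝ, t < 1 ∧ μ (Set.Icc ssharp t) ≠ 0 := by
    by_contra hcon
    push_neg at hcon
    apply hssμ
    have hnull : μ (⋃ n : ℕ, Set.Icc ssharp (1 - 1 / (n + 1))) = 0 :=
      measure_iUnion_null fun n => hcon _ (sub_lt_self 1 (by positivity))
    refine measure_mono_null ?_ hnull
    intro x hx
    obtain ⟨n, hn⟩ := exists_nat_one_div_lt (sub_pos.mpr hx.2)
    exact Set.mem_iUnion.mpr ⟨n, hx.1, by linarith⟩
  have hst : ssharp ≤ t := by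
    by_contra h
    exact hμK (by rw [Set.Icc_eq_empty h]; exact measure_empty)
  have hKsub : Set.Icc ssharp t ⊆ Set.Ioo (0 : ℝ) 1 := fun x hx =>
    ⟨lt_of_lt_of_le hss.1 hx.1, lt_of_le_of_lt hx.2 ht1⟩
  obtain ⟨s₀, hs₀K, hmin⟩ :=
    isCompact_Icc.exists_isMinOn ⟨ssharp, Set.left_mem_Icc.mpr hst⟩ (hccont.mono hKsub)
  have hc₀ : 0 < c s₀ := hcpos s₀ (hKsub hs₀K)
  have hμKtop : μ (Set.Icc ssharp t) ≠ ⊤ := measure_ne_top μ _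
  have hμKpos : 0 < (μ (Set.Icc ssharp t)).toReal := ENNReal.toReal_pos hμK hμKtop
  have hvtop : volume Ω ≠ ⊤ := hΩb.measure_lt_top.ne
  refine ⟨(1 + 4 * (volume Ω).toReal) + 2 / ((μ (Set.Icc ssharp t)).toReal * c s₀), by positivity,
    ?_⟩
  intro u hu _hfin
  have hNss : (0 : ℝ) < (N : ℝ) + 2 * ssharp := by
    have h1 : (0 : ℝ) ≤ (N : ℝ) := Nat.cast_nonneg N
    linarith [hss.1]
  -- measurability of the Gagliardo integrands
  have hgm : ∀ r : ℝ,
      Measurable (fun p : EuclideanSpace ℝ (Fin N) × EuclideanSpace ℝ (Fin N) =>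
        ENNReal.ofReal (|u p.1 - u p.2| ^ 2 / ‖p.1 - p.2‖ ^ ((N : ℝ) + 2 * r))) := by
    intro r
    exact ((((hu.comp measurable_fst).sub (hu.comp measurable_snd)).abs.pow
      measurable_const).div
      (((measurable_fst.sub measurable_snd).norm).pow measurable_const)).ennreal_ofReal
  -- measurability of `s ↦ ∫⁻_Q g_s`
  have hI : Measurable (fun s : ℝ =>
      ∫⁻ p in ((Ωᶜ ×ˢ Ωᶜ)ᶜ : Set (EuclideanSpace ℝ (Fin N) × EuclideanSpace ℝ (Fin N))),
        ENNReal.ofReal (|u p.1 - u p.2| ^ 2 / ‖p.1 - p.2‖ ^ ((N : ℝ) + 2 * s))) := by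
    apply Measurable.lintegral_prod_right
    unfold Function.uncurry
    exact ((((hu.comp (measurable_fst.comp measurable_snd)).sub
        (hu.comp (measurable_snd.comp measurable_snd))).abs.pow measurable_const).div
      ((((measurable_fst.comp measurable_snd).sub
          (measurable_snd.comp measurable_snd)).norm).pow
        (measurable_const.add (measurable_const.mul measurable_fst)))).ennreal_ofReal
  -- pointwise comparison of kernels, for `s ∈ [s♯, t]`
  have hpt : ∀ s ∈ Set.Icc ssharp t, ∀ x y : EuclideanSpace ℝ (Fin N),
      |u x - u y| ^ 2 / ‖x - y‖ ^ ((N : ℝ) + 2 * ssharp) ≤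
        |u x - u y| ^ 2 / ‖x - y‖ ^ ((N : ℝ) + 2 * s) + (2 * u x ^ 2 + 2 * u y ^ 2) := by
    intro s hs x y
    have ha0 : (0 : ℝ) ≤ |u x - u y| ^ 2 := sq_nonneg _
    have hab : |u x - u y| ^ 2 ≤ 2 * u x ^ 2 + 2 * u y ^ 2 := by
      rw [sq_abs]; nlinarith [sq_nonneg (u x + u y)]
    have hd0 : (0 : ℝ) ≤ ‖x - y‖ := norm_nonneg _
    have hds : (0 : ℝ) ≤ |u x - u y| ^ 2 / ‖x - y‖ ^ ((N : ℝ) + 2 * s) :=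
      div_nonneg ha0 (Real.rpow_nonneg hd0 _)
    rcases eq_or_lt_of_le hd0 with h0 | hdpos
    · have hNs : (0 : ℝ) < (N : ℝ) + 2 * s := by linarith [hs.1]
      rw [← h0, Real.zero_rpow (ne_of_gt hNss), Real.zero_rpow (ne_of_gt hNs), div_zero]
      nlinarith [sq_nonneg (u x), sq_nonneg (u y)]
    rcases le_or_gt ‖x - y‖ 1 with hd1 | hd1
    · have hpow : ‖x - y‖ ^ ((N : ℝ) + 2 * s) ≤ ‖x - y‖ ^ ((N : ℝ) + 2 * ssharp) :=
        Real.rpow_le_rpow_of_exponent_ge hdpos hd1 (by linarith [hs.1])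
      have hpos : (0 : ℝ) < ‖x - y‖ ^ ((N : ℝ) + 2 * s) := Real.rpow_pos_of_pos hdpos _
      have hdd := div_le_div_of_nonneg_left ha0 hpos hpow
      nlinarith [sq_nonneg (u x), sq_nonneg (u y)]
    · have hpow1 : (1 : ℝ) ≤ ‖x - y‖ ^ ((N : ℝ) + 2 * ssharp) :=
        Real.one_le_rpow hd1.le hNss.le
      have hdd := div_le_self ha0 hpow1
      linarith
  have hptE : ∀ s ∈ Set.Icc ssharp t,
      ∀ p : EuclideanSpace ℝ (Fin N) × EuclideanSpace ℝ (Fin N),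
      ENNReal.ofReal (|u p.1 - u p.2| ^ 2 / ‖p.1 - p.2‖ ^ ((N : ℝ) + 2 * ssharp)) ≤
        ENNReal.ofReal (|u p.1 - u p.2| ^ 2 / ‖p.1 - p.2‖ ^ ((N : ℝ) + 2 * s)) +
          (ENNReal.ofReal (2 * u p.1 ^ 2) + ENNReal.ofReal (2 * u p.2 ^ 2)) := by
    intro s hs p
    calc ENNReal.ofReal (|u p.1 - u p.2| ^ 2 / ‖p.1 - p.2‖ ^ ((N : ℝ) + 2 * ssharp))
        ≤ ENNReal.ofReal (|u p.1 - u p.2| ^ 2 / ‖p.1 - p.2‖ ^ ((N : ℝ) + 2 * s) +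
            (2 * u p.1 ^ 2 + 2 * u p.2 ^ 2)) :=
          ENNReal.ofReal_le_ofReal (hpt s hs p.1 p.2)
      _ = _ := by
          rw [ENNReal.ofReal_add
              (div_nonneg (sq_nonneg _) (Real.rpow_nonneg (norm_nonneg _) _)) (by positivity),
            ENNReal.ofReal_add (by positivity) (by positivity)]
  -- iterated integrals over Ω × Ω as product-measure integrals
  have hprod : ∀ f : EuclideanSpace ℝ (Fin N) × EuclideanSpace ℝ (Fin N) → ℝ≥0∞,
      Measurable f → (∫⁻ x in Ω, ∫⁻ y in Ω, f (x, y)) = ∫⁻ p in Ω ×ˢ Ω, f p := by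
    intro f hf
    rw [← lintegral_prod f hf.aemeasurable, Measure.prod_restrict, ← Measure.volume_eq_prod]
  have hsubQ : (Ω ×ˢ Ω : Set (EuclideanSpace ℝ (Fin N) × EuclideanSpace ℝ (Fin N))) ⊆
      (Ωᶜ ×ˢ Ωᶜ)ᶜ := by
    intro p hp hmem
    exact hmem.1 hp.1
  have hL2 : (∫⁻ x in Ω, ENNReal.ofReal (2 * u x ^ 2)) =
      2 * ∫⁻ x in Ω, ENNReal.ofReal (u x ^ 2) := by
    simp_rw [ENNReal.ofReal_mul (by norm_num : (0 : ℝ) ≤ 2), ENNReal.ofReal_ofNat]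
    rw [lintegral_const_mul' 2 _ (by norm_num)]
  have hmeas2 : Measurable fun x : EuclideanSpace ℝ (Fin N) =>
      ENNReal.ofReal (2 * u x ^ 2) :=
    (measurable_const.mul (hu.pow measurable_const)).ennreal_ofReal
  have hsum : (∫⁻ p in
        (Ω ×ˢ Ω : Set (EuclideanSpace ℝ (Fin N) × EuclideanSpace ℝ (Fin N))),
        (ENNReal.ofReal (2 * u p.1 ^ 2) + ENNReal.ofReal (2 * u p.2 ^ 2)))
      = 4 * volume Ω * ∫⁻ x in Ω, ENNReal.ofReal (u x ^ 2) := by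
    rw [← hprod (fun p => ENNReal.ofReal (2 * u p.1 ^ 2) + ENNReal.ofReal (2 * u p.2 ^ 2))
      ((hmeas2.comp measurable_fst).add (hmeas2.comp measurable_snd))]
    have hinner : ∀ x : EuclideanSpace ℝ (Fin N),
        (∫⁻ y in Ω, (ENNReal.ofReal (2 * u x ^ 2) + ENNReal.ofReal (2 * u y ^ 2)))
          = ENNReal.ofReal (2 * u x ^ 2) * volume Ω +
            2 * ∫⁻ x in Ω, ENNReal.ofReal (u x ^ 2) := by
      intro x
      rw [lintegral_add_right _ hmeas2, setLIntegral_const, hL2]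
    simp_rw [hinner]
    rw [lintegral_add_right _ measurable_const, lintegral_mul_const _ hmeas2,
      setLIntegral_const, hL2]
    ring
  -- key bound: the s♯ iterated Gagliardo integral vs the energy at level s
  have hJs : ∀ s ∈ Set.Icc ssharp t,
      (∫⁻ x in Ω, ∫⁻ y in Ω,
          ENNReal.ofReal (|u x - u y| ^ 2 / ‖x - y‖ ^ ((N : ℝ) + 2 * ssharp)))
        ≤ (∫⁻ p in ((Ωᶜ ×ˢ Ωᶜ)ᶜ :
              Set (EuclideanSpace ℝ (Fin N) × EuclideanSpace ℝ (Fin N))),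
            ENNReal.ofReal (|u p.1 - u p.2| ^ 2 / ‖p.1 - p.2‖ ^ ((N : ℝ) + 2 * s))) +
          4 * volume Ω * ∫⁻ x in Ω, ENNReal.ofReal (u x ^ 2) := by
    intro s hs
    rw [hprod _ (hgm ssharp)]
    calc (∫⁻ p in (Ω ×ˢ Ω : Set (EuclideanSpace ℝ (Fin N) × EuclideanSpace ℝ (Fin N))),
          ENNReal.ofReal (|u p.1 - u p.2| ^ 2 / ‖p.1 - p.2‖ ^ ((N : ℝ) + 2 * ssharp)))
        ≤ ∫⁻ p in (Ω ×ˢ Ω : Set (EuclideanSpace ℝ (Fin N) × EuclideanSpace ℝ (Fin N))),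
            (ENNReal.ofReal (|u p.1 - u p.2| ^ 2 / ‖p.1 - p.2‖ ^ ((N : ℝ) + 2 * s)) +
              (ENNReal.ofReal (2 * u p.1 ^ 2) + ENNReal.ofReal (2 * u p.2 ^ 2))) :=
          lintegral_mono fun p => hptE s hs p
      _ = (∫⁻ p in (Ω ×ˢ Ω : Set (EuclideanSpace ℝ (Fin N) × EuclideanSpace ℝ (Fin N))),
            ENNReal.ofReal (|u p.1 - u p.2| ^ 2 / ‖p.1 - p.2‖ ^ ((N : ℝ) + 2 * s))) +
          ∫⁻ p in (Ω ×ˢ Ω : Set (EuclideanSpace ℝ (Fin N) × EuclideanSpace ℝ (Fin N))),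
            (ENNReal.ofReal (2 * u p.1 ^ 2) + ENNReal.ofReal (2 * u p.2 ^ 2)) :=
          lintegral_add_left (hgm s) _
      _ ≤ _ := by
          rw [hsum]
          exact add_le_add_left (lintegral_mono_set hsubQ) _
  -- integrate the bound in s against μ over K = [s♯, t]
  have hc₀E : (ENNReal.ofReal (c s₀)) ≠ 0 := (ENNReal.ofReal_pos.mpr hc₀).ne'
  have hμJ : μ (Set.Icc ssharp t) *
        (∫⁻ x in Ω, ∫⁻ y in Ω,
          ENNReal.ofReal (|u x - u y| ^ 2 / ‖x - y‖ ^ ((N : ℝ) + 2 * ssharp)))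
      ≤ (ENNReal.ofReal (c s₀))⁻¹ *
          (∫⁻ s in Set.Ioo (0 : ℝ) 1,
            (ENNReal.ofReal (c s) *
              ∫⁻ p in ((Ωᶜ ×ˢ Ωᶜ)ᶜ :
                  Set (EuclideanSpace ℝ (Fin N) × EuclideanSpace ℝ (Fin N))),
                ENNReal.ofReal (|u p.1 - u p.2| ^ 2 / ‖p.1 - p.2‖ ^ ((N : ℝ) + 2 * s))) ∂μ) +
        (4 * volume Ω * ∫⁻ x in Ω, ENNReal.ofReal (u x ^ 2)) * μ (Set.Icc ssharp t) := by
    calc μ (Set.Icc ssharp t) * (∫⁻ x in Ω, ∫⁻ y in Ω,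
            ENNReal.ofReal (|u x - u y| ^ 2 / ‖x - y‖ ^ ((N : ℝ) + 2 * ssharp)))
        = ∫⁻ _s in Set.Icc ssharp t, (∫⁻ x in Ω, ∫⁻ y in Ω,
            ENNReal.ofReal (|u x - u y| ^ 2 / ‖x - y‖ ^ ((N : ℝ) + 2 * ssharp))) ∂μ := by
          rw [setLIntegral_const, mul_comm]
      _ ≤ ∫⁻ s in Set.Icc ssharp t,
            ((ENNReal.ofReal (c s₀))⁻¹ * (ENNReal.ofReal (c s) *
              ∫⁻ p in ((Ωᶜ ×ˢ Ωᶜ)ᶜ :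
                  Set (EuclideanSpace ℝ (Fin N) × EuclideanSpace ℝ (Fin N))),
                ENNReal.ofReal (|u p.1 - u p.2| ^ 2 / ‖p.1 - p.2‖ ^ ((N : ℝ) + 2 * s))) +
              4 * volume Ω * ∫⁻ x in Ω, ENNReal.ofReal (u x ^ 2)) ∂μ := by
          refine setLIntegral_mono
            ((measurable_const.mul (hcm.ennreal_ofReal.mul hI)).add measurable_const) ?_
          intro s hs
          refine (hJs s hs).trans (add_le_add_left ?_ _)
          have h1 : (1 : ℝ≥0∞) ≤ (ENNReal.ofReal (c s₀))⁻¹ * ENNReal.ofReal (c s) := by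
            rw [← ENNReal.inv_mul_cancel hc₀E ENNReal.ofReal_ne_top]
            exact mul_le_mul_right (ENNReal.ofReal_le_ofReal (hmin hs)) _
          calc (∫⁻ p in ((Ωᶜ ×ˢ Ωᶜ)ᶜ :
                  Set (EuclideanSpace ℝ (Fin N) × EuclideanSpace ℝ (Fin N))),
                ENNReal.ofReal (|u p.1 - u p.2| ^ 2 / ‖p.1 - p.2‖ ^ ((N : ℝ) + 2 * s)))
              = 1 * _ := (one_mul _).symm
            _ ≤ ((ENNReal.ofReal (c s₀))⁻¹ * ENNReal.ofReal (c s)) * _ :=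
                mul_le_mul_left h1 _
            _ = _ := mul_assoc _ _ _
      _ = (ENNReal.ofReal (c s₀))⁻¹ *
            (∫⁻ s in Set.Icc ssharp t,
              (ENNReal.ofReal (c s) *
                ∫⁻ p in ((Ωᶜ ×ˢ Ωᶜ)ᶜ :
                    Set (EuclideanSpace ℝ (Fin N) × EuclideanSpace ℝ (Fin N))),
                  ENNReal.ofReal (|u p.1 - u p.2| ^ 2 / ‖p.1 - p.2‖ ^ ((N : ℝ) + 2 * s))) ∂μ) +
          (4 * volume Ω * ∫⁻ x in Ω, ENNReal.ofReal (u x ^ 2)) * μ (Set.Icc ssharp t) := by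
          rw [lintegral_add_right _ measurable_const,
            lintegral_const_mul' _ _ (ENNReal.inv_ne_top.mpr hc₀E), setLIntegral_const]
      _ ≤ _ := by
          exact add_le_add_left
            (mul_le_mul_right (lintegral_mono_set hKsub) _) _
  -- divide by μ(K)
  have hJle : (∫⁻ x in Ω, ∫⁻ y in Ω,
        ENNReal.ofReal (|u x - u y| ^ 2 / ‖x - y‖ ^ ((N : ℝ) + 2 * ssharp)))
      ≤ (μ (Set.Icc ssharp t))⁻¹ * (ENNReal.ofReal (c s₀))⁻¹ *
          (∫⁻ s in Set.Ioo (0 : ℝ) 1,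
            (ENNReal.ofReal (c s) *
              ∫⁻ p in ((Ωᶜ ×ˢ Ωᶜ)ᶜ :
                  Set (EuclideanSpace ℝ (Fin N) × EuclideanSpace ℝ (Fin N))),
                ENNReal.ofReal (|u p.1 - u p.2| ^ 2 / ‖p.1 - p.2‖ ^ ((N : ℝ) + 2 * s))) ∂μ) +
        4 * volume Ω * ∫⁻ x in Ω, ENNReal.ofReal (u x ^ 2) := by
    have h2 : (∫⁻ x in Ω, ∫⁻ y in Ω,
          ENNReal.ofReal (|u x - u y| ^ 2 / ‖x - y‖ ^ ((N : ℝ) + 2 * ssharp)))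
        = (μ (Set.Icc ssharp t))⁻¹ * (μ (Set.Icc ssharp t) *
            (∫⁻ x in Ω, ∫⁻ y in Ω,
              ENNReal.ofReal (|u x - u y| ^ 2 / ‖x - y‖ ^ ((N : ℝ) + 2 * ssharp)))) := by
      rw [← mul_assoc, ENNReal.inv_mul_cancel hμK hμKtop, one_mul]
    rw [h2]
    refine (mul_le_mul_right hμJ _).trans ?_
    rw [mul_add, ← mul_assoc]
    refine add_le_add_right (le_of_eq ?_) _
    rw [mul_comm (4 * volume Ω * _) (μ (Set.Icc ssharp t)), ← mul_assoc,
      ENNReal.inv_mul_cancel hμK hμKtop, one_mul]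
  -- identify the constant
  have hCL : (1 : ℝ≥0∞) + 4 * volume Ω ≤
      ENNReal.ofReal ((1 + 4 * (volume Ω).toReal) + 2 / ((μ (Set.Icc ssharp t)).toReal * c s₀)) := by
    have heq : ENNReal.ofReal (1 + 4 * (volume Ω).toReal) = 1 + 4 * volume Ω := by
      rw [ENNReal.ofReal_add (by norm_num) (by positivity), ENNReal.ofReal_one,
        ENNReal.ofReal_mul (by norm_num), ENNReal.ofReal_ofNat, ENNReal.ofReal_toReal hvtop]
    rw [← heq]
    apply ENNReal.ofReal_le_ofReal
    have h3 : (0 : ℝ) ≤ 2 / ((μ (Set.Icc ssharp t)).toReal * c s₀) := by positivity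
    linarith
  have hCE : 2 * ((μ (Set.Icc ssharp t))⁻¹ * (ENNReal.ofReal (c s₀))⁻¹) ≤
      ENNReal.ofReal ((1 + 4 * (volume Ω).toReal) + 2 / ((μ (Set.Icc ssharp t)).toReal * c s₀)) := by
    have hkey : (μ (Set.Icc ssharp t))⁻¹ * (ENNReal.ofReal (c s₀))⁻¹ =
        ENNReal.ofReal (((μ (Set.Icc ssharp t)).toReal * c s₀)⁻¹) := by
      rw [mul_inv, ENNReal.ofReal_mul (by positivity), ENNReal.ofReal_inv_of_pos hμKpos,
        ENNReal.ofReal_inv_of_pos hc₀, ENNReal.ofReal_toReal hμKtop]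
    have h2of : (2 : ℝ≥0∞) * ENNReal.ofReal (((μ (Set.Icc ssharp t)).toReal * c s₀)⁻¹) =
        ENNReal.ofReal (2 * ((μ (Set.Icc ssharp t)).toReal * c s₀)⁻¹) := by
      rw [ENNReal.ofReal_mul (by norm_num : (0 : ℝ) ≤ 2), ENNReal.ofReal_ofNat]
    rw [hkey, h2of]
    apply ENNReal.ofReal_le_ofReal
    have h4 : (0 : ℝ) ≤ (volume Ω).toReal := ENNReal.toReal_nonneg
    have h5 : 2 * ((μ (Set.Icc ssharp t)).toReal * c s₀)⁻¹ =
        2 / ((μ (Set.Icc ssharp t)).toReal * c s₀) := by rw [div_eq_mul_inv]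
    nlinarith
  -- final assembly
  refine le_trans (add_le_add_right hJle _) ?_
  have h22 : (2 : ℝ≥0∞) * (1 / 2) = 1 := by
    rw [one_div]; exact ENNReal.mul_inv_cancel (by norm_num) (by norm_num)
  set LL := ∫⁻ x in Ω, ENNReal.ofReal (u x ^ 2) with hLL
  set En := (∫⁻ s in Set.Ioo (0 : ℝ) 1,
      (ENNReal.ofReal (c s) *
        ∫⁻ p in ((Ωᶜ ×ˢ Ωᶜ)ᶜ :
            Set (EuclideanSpace ℝ (Fin N) × EuclideanSpace ℝ (Fin N))),
          ENNReal.ofReal (|u p.1 - u p.2| ^ 2 / ‖p.1 - p.2‖ ^ ((N : ℝ) + 2 * s))) ∂μ) with hEn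
  set X := (μ (Set.Icc ssharp t))⁻¹ * (ENNReal.ofReal (c s₀))⁻¹ with hX
  set CC := ENNReal.ofReal
    ((1 + 4 * (volume Ω).toReal) + 2 / ((μ (Set.Icc ssharp t)).toReal * c s₀)) with hCC
  calc LL + (X * En + 4 * volume Ω * LL)
      = (1 + 4 * volume Ω) * LL + (2 * X) * ((1 / 2) * En) := by
        rw [mul_mul_mul_comm, h22, one_mul]; ring
    _ ≤ CC * LL + CC * ((1 / 2) * En) :=
        add_le_add (mul_le_mul_left hCL _) (mul_le_mul_left hCE _)
    _ = CC * (LL + (1 / 2) * En) := (mul_add _ _ _).symm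
end
end

section
/- (Continuity across the boundary at exterior points.) Let Ω ⊆ ℝᴺ be bounded and open, μ a finite nonnegative Borel measure on (0,1) with sup_{s∈(0,1)} c_{N,s} < ∞, and u : ℝᴺ → ℝ with u bounded and continuous on Ω̄, satisfying for every x ∈ ℝᴺ∖Ω̄ the identity u(x) = (∫_{(0,1)} c_{N,s} ∫_Ω u(y)/|x−y|^{N+2s} dy dμ(s)) / (∫_{(0,1)} c_{N,s} ∫_Ω 1/|x−y|^{N+2s} dy dμ(s)). Then u is continuous at every point of ℝᴺ∖Ω̄. -/
open MeasureTheory Set Filter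

noncomputable section

/-- Exterior continuity: a bounded function, continuous on `Ω̄` and given outside `Ω̄` by
the Neumann mean-value formula, is continuous at every point of `ℝᴺ∖Ω̄`. -/
theorem statement13 (N : ℕ) (Ω : Set (EuclideanSpace ℝ (Fin N)))
    (hΩo : IsOpen Ω) (hΩb : Bornology.IsBounded Ω)
    (μ : Measure ℝ) [IsFiniteMeasure μ]
    (c : ℝ → ℝ) (hcm : Measurable c) (hcpos : ∀ s ∈ Set.Ioo (0 : ℝ) 1, 0 < c s)
    (M : ℝ) (hM : ∀ s ∈ Set.Ioo (0 : ℝ) 1, c s ≤ M)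
    (u : EuclideanSpace ℝ (Fin N) → ℝ) (hum : Measurable u)
    (hub : ∃ K, ∀ x, |u x| ≤ K)
    (huc : ContinuousOn u (closure Ω))
    (hrep : ∀ x ∉ closure Ω,
      u x = (∫ s in Set.Ioo (0 : ℝ) 1,
              (c s * ∫ y in Ω, u y / ‖x - y‖ ^ ((N : ℝ) + 2 * s)) ∂μ) /
            (∫ s in Set.Ioo (0 : ℝ) 1,
              (c s * ∫ y in Ω, 1 / ‖x - y‖ ^ ((N : ℝ) + 2 * s)) ∂μ)) :
    ∀ x ∉ closure Ω, ContinuousAt u x := by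
  obtain ⟨K, hK⟩ := hub
  have hK0 : 0 ≤ K := le_trans (abs_nonneg _) (hK 0)
  intro x₀ hx₀
  -- trivial case : Ω = ∅
  rcases Set.eq_empty_or_nonempty Ω with hΩe | hΩne
  · subst hΩe
    have hz : ∀ x, u x = 0 := by
      intro x
      have := hrep x (by simp)
      simpa using this
    have : u = fun _ => 0 := funext hz
    rw [this]; exact continuousAt_const
  -- trivial case : μ (Ioo 0 1) = 0
  by_cases hμ0 : μ (Set.Ioo (0 : ℝ) 1) = 0
  · have hrestr : μ.restrict (Set.Ioo (0 : ℝ) 1) = 0 :=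
      Measure.restrict_eq_zero.2 hμ0
    have hz : ∀ x ∉ closure Ω, u x = 0 := by
      intro x hx
      rw [hrep x hx, hrestr]
      simp
    have hev : (fun _ => (0 : ℝ)) =ᶠ[nhds x₀] u := by
      filter_upwards [isClosed_closure.isOpen_compl.mem_nhds hx₀] with x hx
      exact (hz x hx).symm
    exact continuousAt_const.congr hev
  -- main case
  have hμpos : 0 < μ (Set.Ioo (0 : ℝ) 1) := lt_of_le_of_ne zero_le (Ne.symm hμ0)
  have hM0 : 0 < M := lt_of_lt_of_le (hcpos (1/2) (by norm_num)) (hM (1/2) (by norm_num))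
  -- geometric setup
  obtain ⟨ε, hε, hball⟩ : ∃ ε > 0, Metric.ball x₀ ε ⊆ (closure Ω)ᶜ :=
    Metric.isOpen_iff.1 isClosed_closure.isOpen_compl x₀ hx₀
  set r : ℝ := ε / 2 with hr_def
  have hr : 0 < r := half_pos hε
  have hdist : ∀ x ∈ Metric.ball x₀ r, ∀ y ∈ Ω, r ≤ ‖x - y‖ := by
    intro x hx y hy
    have h1 : ε ≤ dist x₀ y := by
      by_contra h
      push_neg at h
      exact (hball (Metric.mem_ball'.2 h)) (subset_closure hy)
    have h2 : dist x₀ x < r := Metric.mem_ball'.1 hx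
    have : ε - r ≤ dist x y := by
      have := dist_triangle x₀ x y
      have h3 : dist x₀ y ≤ dist x₀ x + dist x y := this
      linarith
    rw [dist_eq_norm] at this
    linarith [this, (by ring : ε - r = r)]
  have hx₀ball : x₀ ∈ Metric.ball x₀ r := Metric.mem_ball_self hr
  -- the uniform constant
  set C : ℝ := max (r ^ (-((N : ℝ) + 2))) 1 with hC_def
  have hC1 : (0:ℝ) < C := lt_of_lt_of_le one_pos (le_max_right _ _)
  have hCbound : ∀ s ∈ Set.Ioo (0 : ℝ) 1, ∀ t : ℝ, r ≤ t →
      1 / t ^ ((N : ℝ) + 2 * s) ≤ C := by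
    intro s hs t ht
    have hp0 : (0:ℝ) ≤ (N : ℝ) + 2 * s := by
      have := hs.1; positivity
    have hpN2 : (N : ℝ) + 2 * s ≤ (N : ℝ) + 2 := by nlinarith [hs.2.le]
    have htpos : 0 < t := lt_of_lt_of_le hr ht
    have h1 : r ^ ((N : ℝ) + 2 * s) ≤ t ^ ((N : ℝ) + 2 * s) :=
      Real.rpow_le_rpow hr.le ht hp0
    have h2 : 1 / t ^ ((N : ℝ) + 2 * s) ≤ 1 / r ^ ((N : ℝ) + 2 * s) :=
      one_div_le_one_div_of_le (Real.rpow_pos_of_pos hr _) h1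
    have h3 : 1 / r ^ ((N : ℝ) + 2 * s) = r ^ (-((N : ℝ) + 2 * s)) := by
      rw [Real.rpow_neg hr.le, one_div]
    rcases le_or_gt r 1 with hr1 | hr1
    · have h4 : r ^ (-((N : ℝ) + 2 * s)) ≤ r ^ (-((N : ℝ) + 2)) :=
        Real.rpow_le_rpow_of_exponent_ge hr hr1 (by linarith)
      calc 1 / t ^ ((N : ℝ) + 2 * s) ≤ r ^ (-((N : ℝ) + 2 * s)) := by rw [← h3]; exact h2
        _ ≤ r ^ (-((N : ℝ) + 2)) := h4
        _ ≤ C := le_max_left _ _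
    · have h4 : r ^ (-((N : ℝ) + 2 * s)) ≤ 1 :=
        Real.rpow_le_one_of_one_le_of_nonpos hr1.le (by linarith)
      calc 1 / t ^ ((N : ℝ) + 2 * s) ≤ r ^ (-((N : ℝ) + 2 * s)) := by rw [← h3]; exact h2
        _ ≤ 1 := h4
        _ ≤ C := le_max_right _ _
  -- volume facts
  have hVfin : volume Ω < ⊤ := hΩb.measure_lt_top
  set V : ℝ := (volume Ω).toReal with hV_def
  have hVpos : 0 < volume Ω := hΩo.measure_pos volume hΩne
  haveI : IsFiniteMeasure (volume.restrict Ω) :=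
    ⟨by rwa [Measure.restrict_apply_univ]⟩
  have hV0 : 0 ≤ V := ENNReal.toReal_nonneg
  -- measurability of the inner integrands
  have hmeas1 : ∀ (x : EuclideanSpace ℝ (Fin N)) (s : ℝ),
      AEStronglyMeasurable (fun y => u y / ‖x - y‖ ^ ((N : ℝ) + 2 * s))
        (volume.restrict Ω) := by
    intro x s
    exact (hum.div (((measurable_const.sub measurable_id).norm).pow
      measurable_const)).aestronglyMeasurable
  have hmeas2 : ∀ (x : EuclideanSpace ℝ (Fin N)) (s : ℝ),
      AEStronglyMeasurable (fun y => 1 / ‖x - y‖ ^ ((N : ℝ) + 2 * s))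
        (volume.restrict Ω) := by
    intro x s
    exact (measurable_const.div (((measurable_const.sub measurable_id).norm).pow
      measurable_const)).aestronglyMeasurable
  -- uniform bounds on the inner integrals
  have hIb1 : ∀ x ∈ Metric.ball x₀ r, ∀ s ∈ Set.Ioo (0:ℝ) 1,
      |∫ y in Ω, u y / ‖x - y‖ ^ ((N : ℝ) + 2 * s)| ≤ K * C * V := by
    intro x hx s hs
    have := norm_setIntegral_le_of_norm_le_const (μ := volume) (s := Ω)
      (f := fun y => u y / ‖x - y‖ ^ ((N : ℝ) + 2 * s)) hVfin (C := K * C)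
      (fun y hy => by
        have ht := hdist x hx y hy
        have htp : 0 < ‖x - y‖ ^ ((N : ℝ) + 2 * s) :=
          Real.rpow_pos_of_pos (lt_of_lt_of_le hr ht) _
        rw [Real.norm_eq_abs, abs_div, abs_of_pos htp]
        calc |u y| / ‖x - y‖ ^ ((N : ℝ) + 2 * s)
            = |u y| * (1 / ‖x - y‖ ^ ((N : ℝ) + 2 * s)) := by ring
          _ ≤ K * C := by
              apply mul_le_mul (hK y) (hCbound s hs _ ht) (by positivity) hK0)
    rw [Real.norm_eq_abs] at this
    exact this
  have hIb2 : ∀ x ∈ Metric.ball x₀ r, ∀ s ∈ Set.Ioo (0:ℝ) 1,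
      |∫ y in Ω, 1 / ‖x - y‖ ^ ((N : ℝ) + 2 * s)| ≤ C * V := by
    intro x hx s hs
    have := norm_setIntegral_le_of_norm_le_const (μ := volume) (s := Ω)
      (f := fun y => 1 / ‖x - y‖ ^ ((N : ℝ) + 2 * s)) hVfin (C := C)
      (fun y hy => by
        have ht := hdist x hx y hy
        have htp : 0 < ‖x - y‖ ^ ((N : ℝ) + 2 * s) :=
          Real.rpow_pos_of_pos (lt_of_lt_of_le hr ht) _
        rw [Real.norm_eq_abs, abs_div, abs_of_pos htp, abs_one]
        exact hCbound s hs _ ht)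
    rw [Real.norm_eq_abs] at this
    exact this
  -- continuity of the inner integrals at x₀, for each fixed s ∈ (0,1)
  have hIc1 : ∀ s ∈ Set.Ioo (0:ℝ) 1,
      ContinuousAt (fun x => ∫ y in Ω, u y / ‖x - y‖ ^ ((N : ℝ) + 2 * s)) x₀ := by
    intro s hs
    apply continuousAt_of_dominated (bound := fun _ => K * C)
    · exact Eventually.of_forall fun x => hmeas1 x s
    · filter_upwards [Metric.ball_mem_nhds x₀ hr] with x hx
      filter_upwards [ae_restrict_mem hΩo.measurableSet] with y hy
      have ht := hdist x hx y hy
      have htp : 0 < ‖x - y‖ ^ ((N : ℝ) + 2 * s) :=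
        Real.rpow_pos_of_pos (lt_of_lt_of_le hr ht) _
      rw [Real.norm_eq_abs, abs_div, abs_of_pos htp]
      calc |u y| / ‖x - y‖ ^ ((N : ℝ) + 2 * s)
          = |u y| * (1 / ‖x - y‖ ^ ((N : ℝ) + 2 * s)) := by ring
        _ ≤ K * C := mul_le_mul (hK y) (hCbound s hs _ ht) (by positivity) hK0
    · exact integrable_const _
    · filter_upwards [ae_restrict_mem hΩo.measurableSet] with y hy
      have hne : ‖x₀ - y‖ ≠ 0 := ne_of_gt (lt_of_lt_of_le hr (hdist x₀ hx₀ball y hy))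
      have h1 : ContinuousAt (fun x : EuclideanSpace ℝ (Fin N) => ‖x - y‖) x₀ :=
        ((continuous_id.sub continuous_const).norm).continuousAt
      have h3 : ContinuousAt (fun x : EuclideanSpace ℝ (Fin N) =>
          ‖x - y‖ ^ ((N : ℝ) + 2 * s)) x₀ := h1.rpow_const (Or.inl hne)
      have hne2 : ‖x₀ - y‖ ^ ((N : ℝ) + 2 * s) ≠ 0 :=
        ne_of_gt (Real.rpow_pos_of_pos (lt_of_lt_of_le hr (hdist x₀ hx₀ball y hy)) _)
      exact continuousAt_const.div h3 hne2
  have hIc2 : ∀ s ∈ Set.Ioo (0:ℝ) 1,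
      ContinuousAt (fun x => ∫ y in Ω, 1 / ‖x - y‖ ^ ((N : ℝ) + 2 * s)) x₀ := by
    intro s hs
    apply continuousAt_of_dominated (bound := fun _ => C)
    · exact Eventually.of_forall fun x => hmeas2 x s
    · filter_upwards [Metric.ball_mem_nhds x₀ hr] with x hx
      filter_upwards [ae_restrict_mem hΩo.measurableSet] with y hy
      have ht := hdist x hx y hy
      have htp : 0 < ‖x - y‖ ^ ((N : ℝ) + 2 * s) :=
        Real.rpow_pos_of_pos (lt_of_lt_of_le hr ht) _
      rw [Real.norm_eq_abs, abs_div, abs_of_pos htp, abs_one]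
      exact hCbound s hs _ ht
    · exact integrable_const _
    · filter_upwards [ae_restrict_mem hΩo.measurableSet] with y hy
      have hne : ‖x₀ - y‖ ≠ 0 := ne_of_gt (lt_of_lt_of_le hr (hdist x₀ hx₀ball y hy))
      have h1 : ContinuousAt (fun x : EuclideanSpace ℝ (Fin N) => ‖x - y‖) x₀ :=
        ((continuous_id.sub continuous_const).norm).continuousAt
      have h3 : ContinuousAt (fun x : EuclideanSpace ℝ (Fin N) =>
          ‖x - y‖ ^ ((N : ℝ) + 2 * s)) x₀ := h1.rpow_const (Or.inl hne)
      have hne2 : ‖x₀ - y‖ ^ ((N : ℝ) + 2 * s) ≠ 0 :=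
        ne_of_gt (Real.rpow_pos_of_pos (lt_of_lt_of_le hr (hdist x₀ hx₀ball y hy)) _)
      exact continuousAt_const.div h3 hne2
  -- measurability of the outer integrands in s
  have houtmeas1 : ∀ x : EuclideanSpace ℝ (Fin N),
      AEStronglyMeasurable
        (fun s => c s * ∫ y in Ω, u y / ‖x - y‖ ^ ((N : ℝ) + 2 * s))
        (μ.restrict (Set.Ioo (0:ℝ) 1)) := by
    intro x
    have hm : StronglyMeasurable
        (fun s => ∫ y in Ω, u y / ‖x - y‖ ^ ((N : ℝ) + 2 * s)) := by
      apply StronglyMeasurable.integral_prod_right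
        (f := fun (s : ℝ) (y : EuclideanSpace ℝ (Fin N)) =>
          u y / ‖x - y‖ ^ ((N : ℝ) + 2 * s))
      apply Measurable.stronglyMeasurable
      exact (hum.comp measurable_snd).div
        (((measurable_const.sub measurable_snd).norm).pow
          (measurable_const.add (measurable_const.mul measurable_fst)))
    exact (hcm.aestronglyMeasurable.mul hm.aestronglyMeasurable)
  have houtmeas2 : ∀ x : EuclideanSpace ℝ (Fin N),
      AEStronglyMeasurable
        (fun s => c s * ∫ y in Ω, 1 / ‖x - y‖ ^ ((N : ℝ) + 2 * s))
        (μ.restrict (Set.Ioo (0:ℝ) 1)) := by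
    intro x
    have hm : StronglyMeasurable
        (fun s => ∫ y in Ω, 1 / ‖x - y‖ ^ ((N : ℝ) + 2 * s)) := by
      apply StronglyMeasurable.integral_prod_right
        (f := fun (s : ℝ) (y : EuclideanSpace ℝ (Fin N)) =>
          1 / ‖x - y‖ ^ ((N : ℝ) + 2 * s))
      apply Measurable.stronglyMeasurable
      exact measurable_const.div
        (((measurable_const.sub measurable_snd).norm).pow
          (measurable_const.add (measurable_const.mul measurable_fst)))
    exact (hcm.aestronglyMeasurable.mul hm.aestronglyMeasurable)
  -- continuity of the outer integrals
  have hnumc : ContinuousAt (fun x => ∫ s in Set.Ioo (0:ℝ) 1,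
      (c s * ∫ y in Ω, u y / ‖x - y‖ ^ ((N : ℝ) + 2 * s)) ∂μ) x₀ := by
    apply continuousAt_of_dominated (bound := fun _ => M * (K * C * V))
    · exact Eventually.of_forall houtmeas1
    · filter_upwards [Metric.ball_mem_nhds x₀ hr] with x hx
      filter_upwards [ae_restrict_mem measurableSet_Ioo] with s hs
      rw [Real.norm_eq_abs, abs_mul, abs_of_pos (hcpos s hs)]
      exact mul_le_mul (hM s hs) (hIb1 x hx s hs) (abs_nonneg _) hM0.le
    · exact integrable_const _
    · filter_upwards [ae_restrict_mem measurableSet_Ioo] with s hs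
      exact continuousAt_const.mul (hIc1 s hs)
  have hdenc : ContinuousAt (fun x => ∫ s in Set.Ioo (0:ℝ) 1,
      (c s * ∫ y in Ω, 1 / ‖x - y‖ ^ ((N : ℝ) + 2 * s)) ∂μ) x₀ := by
    apply continuousAt_of_dominated (bound := fun _ => M * (C * V))
    · exact Eventually.of_forall houtmeas2
    · filter_upwards [Metric.ball_mem_nhds x₀ hr] with x hx
      filter_upwards [ae_restrict_mem measurableSet_Ioo] with s hs
      rw [Real.norm_eq_abs, abs_mul, abs_of_pos (hcpos s hs)]
      exact mul_le_mul (hM s hs) (hIb2 x hx s hs) (abs_nonneg _) hM0.le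
    · exact integrable_const _
    · filter_upwards [ae_restrict_mem measurableSet_Ioo] with s hs
      exact continuousAt_const.mul (hIc2 s hs)
  -- positivity of the denominator at x₀
  have hinpos : ∀ s ∈ Set.Ioo (0:ℝ) 1,
      0 < ∫ y in Ω, 1 / ‖x₀ - y‖ ^ ((N : ℝ) + 2 * s) := by
    intro s hs
    rw [setIntegral_pos_iff_support_of_nonneg_ae]
    · refine lt_of_lt_of_le hVpos (measure_mono ?_)
      intro y hy
      refine ⟨?_, hy⟩
      have : 0 < 1 / ‖x₀ - y‖ ^ ((N : ℝ) + 2 * s) := by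
        have := Real.rpow_pos_of_pos (lt_of_lt_of_le hr (hdist x₀ hx₀ball y hy))
          ((N : ℝ) + 2 * s)
        positivity
      exact Function.mem_support.2 (ne_of_gt this)
    · filter_upwards with y
      have := Real.rpow_nonneg (norm_nonneg (x₀ - y)) ((N : ℝ) + 2 * s)
      positivity
    · apply Integrable.mono' (g := fun _ => C) (integrable_const _) (hmeas2 x₀ s)
      filter_upwards [ae_restrict_mem hΩo.measurableSet] with y hy
      have ht := hdist x₀ hx₀ball y hy
      have htp : 0 < ‖x₀ - y‖ ^ ((N : ℝ) + 2 * s) :=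
        Real.rpow_pos_of_pos (lt_of_lt_of_le hr ht) _
      rw [Real.norm_eq_abs, abs_div, abs_of_pos htp, abs_one]
      exact hCbound s hs _ ht
  have hdenpos : 0 < ∫ s in Set.Ioo (0:ℝ) 1,
      (c s * ∫ y in Ω, 1 / ‖x₀ - y‖ ^ ((N : ℝ) + 2 * s)) ∂μ := by
    rw [setIntegral_pos_iff_support_of_nonneg_ae]
    · refine lt_of_lt_of_le hμpos (measure_mono ?_)
      intro s hs
      refine ⟨?_, hs⟩
      exact Function.mem_support.2 (ne_of_gt (mul_pos (hcpos s hs) (hinpos s hs)))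
    · filter_upwards [ae_restrict_mem measurableSet_Ioo] with s hs
      exact (mul_pos (hcpos s hs) (hinpos s hs)).le
    · apply Integrable.mono' (g := fun _ => M * (C * V)) (integrable_const _)
        (houtmeas2 x₀)
      filter_upwards [ae_restrict_mem measurableSet_Ioo] with s hs
      rw [Real.norm_eq_abs, abs_mul, abs_of_pos (hcpos s hs)]
      exact mul_le_mul (hM s hs) (hIb2 x₀ hx₀ball s hs) (abs_nonneg _) hM0.le
  -- conclusion
  have hF : ContinuousAt (fun x =>
      (∫ s in Set.Ioo (0:ℝ) 1,
        (c s * ∫ y in Ω, u y / ‖x - y‖ ^ ((N : ℝ) + 2 * s)) ∂μ) /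
      (∫ s in Set.Ioo (0:ℝ) 1,
        (c s * ∫ y in Ω, 1 / ‖x - y‖ ^ ((N : ℝ) + 2 * s)) ∂μ)) x₀ :=
    hnumc.div hdenc (ne_of_gt hdenpos)
  apply hF.congr
  filter_upwards [Metric.ball_mem_nhds x₀ (half_pos hε)] with x hx
  exact (hrep x (hball (Metric.ball_subset_ball (by linarith) hx))).symm
end
end
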